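/- arXiv:2012.11340 — 2 statements merged into one kernel-verified Lean document; each statement's English description precedes it below -/
import Mathlib

section
/- Under the spectral hypotheses, the upper and lower s-th outer angular values can be computed over trace spaces only: θ̂_s := sup_{V∈𝒢(s,d)} limsup_{n→∞} (1/n) a_{1,n}(V) = sup_{V∈𝒟_0(s,d)} limsup_{n→∞} (1/n) a_{1,n}(V), and θ̂_s(lower) := sup_{V∈𝒢(s,d)} liminf_{n→∞} (1/n) a_{1,n}(V) = sup_{V∈𝒟_0(s,d)} liminf_{n→∞} (1/n) a_{1,n}(V), where a_{1,n}(V) := Σ_{j=1}^{n} ∠(Φ(j−1,0)V, Φ(j,0)V). -/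
open Filter

noncomputable section

abbrev Euc (d : ℕ) := EuclideanSpace ℝ (Fin d)

/-- Angle between the lines spanned by two vectors. -/
noncomputable def vecAngle {d : ℕ} (v w : Euc d) : ℝ :=
  Real.arccos (|(inner ℝ v w : ℝ)| / (‖v‖ * ‖w‖))

/-- Largest principal angle between two subspaces of equal dimension. -/
noncomputable def subAngle {d : ℕ} (V W : Submodule ℝ (Euc d)) : ℝ :=
  Real.arccos (sInf {c : ℝ | ∃ v ∈ V, ‖v‖ = 1 ∧
    c = sSup {r : ℝ | ∃ w ∈ W, ‖w‖ = 1 ∧ r = (inner ℝ v w : ℝ)}})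

/-- Forward product `A (m+n-1) ⋯ A m`. -/
noncomputable def PhiF {d : ℕ} (A : ℕ → (Euc d →L[ℝ] Euc d)) (m : ℕ) : ℕ → (Euc d →L[ℝ] Euc d)
  | 0 => 1
  | n + 1 => A (m + n) ∘L PhiF A m n

/-- Solution operator `Φ(n,m) = A_{n-1} ⋯ A_m` for `n ≥ m`,
`Φ(n,m) = A_n⁻¹ ⋯ A_{m-1}⁻¹` for `n < m`. -/
noncomputable def Phi {d : ℕ} (A : ℕ → (Euc d →L[ℝ] Euc d)) (n m : ℕ) : Euc d →L[ℝ] Euc d :=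
  if m ≤ n then PhiF A m (n - m) else Ring.inverse (PhiF A n (m - n))

/-- `a_{m,n}(V) = Σ_{j=m}^n ∠(Φ(j-1,0)V, Φ(j,0)V)`. -/
noncomputable def angSum {d : ℕ} (A : ℕ → (Euc d →L[ℝ] Euc d)) (V : Submodule ℝ (Euc d))
    (m n : ℕ) : ℝ :=
  ∑ j ∈ Finset.Icc m n, subAngle (V.map (Phi A (j - 1) 0 : Euc d →ₗ[ℝ] Euc d)) (V.map (Phi A j 0 : Euc d →ₗ[ℝ] Euc d))

/-- Fiber projector `𝒫_{k,i} = P_{k,i}^s − P_{k,i+1}^s`. -/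
noncomputable def fiberP {d : ℕ} (P : ℕ → ℕ → (Euc d →L[ℝ] Euc d)) (k i : ℕ) :
    Euc d →L[ℝ] Euc d :=
  P k i - P k (i + 1)

/-- The spectral fiber `𝒲_k^i = range 𝒫_{k,i}`. -/
noncomputable def fiberW {d : ℕ} (P : ℕ → ℕ → (Euc d →L[ℝ] Euc d)) (k i : ℕ) :
    Submodule ℝ (Euc d) :=
  LinearMap.range (fiberP P k i : Euc d →ₗ[ℝ] Euc d)

/-- The trace space `𝒯_k(V) = Σ_{i=1}^ℓ 𝒫_{k,i}(Q_{k,i}^s V)`, where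
`Q_{k,i}^s V = range(P_{k,i}^s) ∩ V`. -/
noncomputable def traceSpace {d : ℕ} (P : ℕ → ℕ → (Euc d →L[ℝ] Euc d)) (ℓ k : ℕ)
    (V : Submodule ℝ (Euc d)) : Submodule ℝ (Euc d) :=
  ⨆ i ∈ Finset.Icc 1 ℓ, (LinearMap.range (P k i : Euc d →ₗ[ℝ] Euc d) ⊓ V).map (fiberP P k i : Euc d →ₗ[ℝ] Euc d)

/-- `V` is a trace space at time `k`: a (direct) sum of subspaces of the fibers. -/
def IsTraceAt {d : ℕ} (P : ℕ → ℕ → (Euc d →L[ℝ] Euc d)) (ℓ k : ℕ)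
    (V : Submodule ℝ (Euc d)) : Prop :=
  ∃ W : ℕ → Submodule ℝ (Euc d),
    (∀ i, 1 ≤ i → i ≤ ℓ → W i ≤ fiberW P k i) ∧ V = ⨆ i ∈ Finset.Icc 1 ℓ, W i

section Aux
open Filter

lemma myIccRange {M : Type*} [AddCommMonoid M] (b : ℕ → M) (n : ℕ) :
    ∑ j ∈ Finset.Icc 1 n, b j = ∑ i ∈ Finset.range n, b (1 + i) := by
  induction n with
  | zero => simp
  | succ n ih =>
      rw [Finset.sum_Icc_succ_top (by omega), ih, Finset.sum_range_succ, Nat.add_comm 1 n]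

lemma myCesaro {b : ℕ → ℝ} (h : Filter.Tendsto b atTop (nhds 0)) :
    Filter.Tendsto (fun n : ℕ => (∑ j ∈ Finset.Icc 1 n, b j) / n) atTop (nhds 0) := by
  have h1 : Filter.Tendsto (fun i : ℕ => b (1 + i)) atTop (nhds 0) := by
    have := h.comp (Filter.tendsto_add_atTop_nat 1)
    simpa [Function.comp_def, Nat.add_comm] using this
  have h2 := h1.cesaro
  simpa [myIccRange, smul_eq_mul, inv_mul_eq_div] using h2

lemma myLimsupCongr {f g : ℕ → ℝ} {B : ℝ}
    (h : Filter.Tendsto (fun n => f n - g n) atTop (nhds 0))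
    (hf : ∀ n, f n ∈ Set.Icc (0:ℝ) B) (hg : ∀ n, g n ∈ Set.Icc (0:ℝ) B) :
    Filter.limsup f atTop = Filter.limsup g atTop := by
  have key : ∀ f g : ℕ → ℝ, Filter.Tendsto (fun n => f n - g n) atTop (nhds 0) →
      (∀ n, f n ∈ Set.Icc (0:ℝ) B) → (∀ n, g n ∈ Set.Icc (0:ℝ) B) →
      Filter.limsup f atTop ≤ Filter.limsup g atTop := by
    intro f g h hf hg
    have hgb : Filter.IsBoundedUnder (· ≤ ·) atTop g :=
      Filter.isBoundedUnder_of ⟨B, fun n => (hg n).2⟩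
    have hgb' : Filter.IsBoundedUnder (· ≥ ·) atTop g :=
      Filter.isBoundedUnder_of ⟨0, fun n => (hg n).1⟩
    have hgc : Filter.IsCoboundedUnder (· ≤ ·) atTop g := hgb'.isCoboundedUnder_le
    have hfc : Filter.IsCoboundedUnder (· ≤ ·) atTop f :=
      (Filter.isBoundedUnder_of ⟨0, fun n => (hf n).1⟩ :
        Filter.IsBoundedUnder (· ≥ ·) atTop f).isCoboundedUnder_le
    refine le_of_forall_pos_le_add fun ε hε => ?_
    have hev : ∀ᶠ n in atTop, f n ≤ g n + ε := by
      have := (Metric.tendsto_nhds.mp h) ε hε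
      filter_upwards [this] with n hn
      have : |f n - g n| < ε := by simpa [Real.dist_eq] using hn
      linarith [abs_lt.mp this |>.2]
    calc Filter.limsup f atTop ≤ Filter.limsup (fun n => g n + ε) atTop :=
          Filter.limsup_le_limsup hev hfc
            (Filter.isBoundedUnder_of ⟨B + ε, fun n => by linarith [(hg n).2]⟩)
      _ = Filter.limsup g atTop + ε := limsup_add_const atTop g ε hgb hgc
  refine le_antisymm (key f g h hf hg) (key g f ?_ hg hf)
  simpa using h.neg

lemma myLiminfCongr {f g : ℕ → ℝ} {B : ℝ}
    (h : Filter.Tendsto (fun n => f n - g n) atTop (nhds 0))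
    (hf : ∀ n, f n ∈ Set.Icc (0:ℝ) B) (hg : ∀ n, g n ∈ Set.Icc (0:ℝ) B) :
    Filter.liminf f atTop = Filter.liminf g atTop := by
  have key : ∀ f g : ℕ → ℝ, Filter.Tendsto (fun n => f n - g n) atTop (nhds 0) →
      (∀ n, f n ∈ Set.Icc (0:ℝ) B) → (∀ n, g n ∈ Set.Icc (0:ℝ) B) →
      Filter.liminf f atTop ≤ Filter.liminf g atTop := by
    intro f g h hf hg
    have hfb' : Filter.IsBoundedUnder (· ≥ ·) atTop f :=
      Filter.isBoundedUnder_of ⟨0, fun n => (hf n).1⟩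
    have hgc : Filter.IsCoboundedUnder (· ≥ ·) atTop g :=
      (Filter.isBoundedUnder_of ⟨B, fun n => (hg n).2⟩ :
        Filter.IsBoundedUnder (· ≤ ·) atTop g).isCoboundedUnder_ge
    refine le_of_forall_pos_le_add fun ε hε => ?_
    have hev : ∀ᶠ n in atTop, f n ≤ g n + ε := by
      have := (Metric.tendsto_nhds.mp h) ε hε
      filter_upwards [this] with n hn
      have : |f n - g n| < ε := by simpa [Real.dist_eq] using hn
      linarith [abs_lt.mp this |>.2]
    have : Filter.liminf f atTop ≤ Filter.liminf (fun n => g n + ε) atTop :=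
      Filter.liminf_le_liminf hev hfb'
        (by
          refine Filter.IsBoundedUnder.isCoboundedUnder_ge ?_
          exact Filter.isBoundedUnder_of ⟨B + ε, fun n => by linarith [(hg n).2]⟩)
    calc Filter.liminf f atTop ≤ Filter.liminf (fun n => g n + ε) atTop := this
      _ = Filter.liminf g atTop + ε := liminf_add_const atTop g ε hgc
          (Filter.isBoundedUnder_of ⟨0, fun n => (hg n).1⟩)
  refine le_antisymm (key f g h hf hg) (key g f ?_ hg hf)
  simpa using h.neg

lemma myArccosUC : ∀ ε > (0:ℝ), ∃ δ > (0:ℝ), ∀ a b : ℝ, |a| ≤ 1 → |b| ≤ 1 →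
    |a - b| ≤ δ → |Real.arccos a - Real.arccos b| ≤ ε := by
  intro ε hε
  have hc : UniformContinuousOn Real.arccos (Set.Icc (-1:ℝ) 1) :=
    (isCompact_Icc).uniformContinuousOn_of_continuous
      (Real.continuous_arccos.continuousOn)
  rw [Metric.uniformContinuousOn_iff] at hc
  obtain ⟨δ, hδ, hδ'⟩ := hc ε hε
  refine ⟨δ/2, by linarith, fun a b ha hb hab => ?_⟩
  have h1 : a ∈ Set.Icc (-1:ℝ) 1 := by rw [Set.mem_Icc]; constructor <;> linarith [abs_le.mp ha |>.1, abs_le.mp ha |>.2]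
  have h2 : b ∈ Set.Icc (-1:ℝ) 1 := by rw [Set.mem_Icc]; constructor <;> linarith [abs_le.mp hb |>.1, abs_le.mp hb |>.2]
  have := hδ' a h1 b h2 (by rw [Real.dist_eq]; linarith)
  rw [Real.dist_eq] at this
  linarith [le_of_lt this]
end Aux

section CVal
variable {E : Type*} [NormedAddCommGroup E] [InnerProductSpace ℝ E]

noncomputable def cVal (V W : Submodule ℝ E) : ℝ :=
  sInf {c : ℝ | ∃ v ∈ V, ‖v‖ = 1 ∧
    c = sSup {r : ℝ | ∃ w ∈ W, ‖w‖ = 1 ∧ r = (inner ℝ v w : ℝ)}}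

lemma subAngle_eq_arccos_cVal {d : ℕ} (V W : Submodule ℝ (Euc d)) :
    subAngle V W = Real.arccos (cVal V W) := rfl

lemma exists_unit_of_ne_bot {W : Submodule ℝ E} (h : W ≠ ⊥) :
    ∃ w ∈ W, ‖w‖ = 1 := by
  obtain ⟨x, hx, hx0⟩ := Submodule.exists_mem_ne_zero_of_ne_bot h
  refine ⟨‖x‖⁻¹ • x, W.smul_mem _ hx, ?_⟩
  rw [norm_smul, norm_inv, norm_norm, inv_mul_cancel₀ (norm_ne_zero_iff.mpr hx0)]

lemma innSet_bddAbove (v : E) (W : Submodule ℝ E) :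
    BddAbove {r : ℝ | ∃ w ∈ W, ‖w‖ = 1 ∧ r = (inner ℝ v w : ℝ)} := by
  refine ⟨‖v‖, fun r hr => ?_⟩
  obtain ⟨w, _, hw1, rfl⟩ := hr
  calc (inner ℝ v w : ℝ) ≤ ‖v‖ * ‖w‖ := real_inner_le_norm v w
    _ = ‖v‖ := by rw [hw1, mul_one]

lemma innSet_nonempty (v : E) {W : Submodule ℝ E} (h : W ≠ ⊥) :
    Set.Nonempty {r : ℝ | ∃ w ∈ W, ‖w‖ = 1 ∧ r = (inner ℝ v w : ℝ)} := by
  obtain ⟨w, hw, hw1⟩ := exists_unit_of_ne_bot h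
  exact ⟨_, w, hw, hw1, rfl⟩

lemma sSup_innSet_nonneg (v : E) {W : Submodule ℝ E} (h : W ≠ ⊥) :
    0 ≤ sSup {r : ℝ | ∃ w ∈ W, ‖w‖ = 1 ∧ r = (inner ℝ v w : ℝ)} := by
  obtain ⟨w, hw, hw1⟩ := exists_unit_of_ne_bot h
  rcases le_or_gt 0 (inner ℝ v w : ℝ) with hpos | hneg
  · exact le_trans hpos (le_csSup (innSet_bddAbove v W) ⟨w, hw, hw1, rfl⟩)
  · refine le_trans (by linarith : (0:ℝ) ≤ -(inner ℝ v w : ℝ))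
      (le_csSup (innSet_bddAbove v W) ⟨-w, W.neg_mem hw, by simpa using hw1, ?_⟩)
    rw [inner_neg_right]

lemma sSup_innSet_le_one {v : E} (hv : ‖v‖ = 1) {W : Submodule ℝ E} (h : W ≠ ⊥) :
    sSup {r : ℝ | ∃ w ∈ W, ‖w‖ = 1 ∧ r = (inner ℝ v w : ℝ)} ≤ 1 := by
  refine csSup_le (innSet_nonempty v h) fun r hr => ?_
  obtain ⟨w, _, hw1, rfl⟩ := hr
  calc (inner ℝ v w : ℝ) ≤ ‖v‖ * ‖w‖ := real_inner_le_norm v w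
    _ = 1 := by rw [hv, hw1, mul_one]

lemma cSet_nonempty {V : Submodule ℝ E} (hV : V ≠ ⊥) (W : Submodule ℝ E) :
    Set.Nonempty {c : ℝ | ∃ v ∈ V, ‖v‖ = 1 ∧
      c = sSup {r : ℝ | ∃ w ∈ W, ‖w‖ = 1 ∧ r = (inner ℝ v w : ℝ)}} := by
  obtain ⟨v, hv, hv1⟩ := exists_unit_of_ne_bot hV
  exact ⟨_, v, hv, hv1, rfl⟩

lemma cSet_bddBelow (V : Submodule ℝ E) {W : Submodule ℝ E} (hW : W ≠ ⊥) :
    BddBelow {c : ℝ | ∃ v ∈ V, ‖v‖ = 1 ∧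
      c = sSup {r : ℝ | ∃ w ∈ W, ‖w‖ = 1 ∧ r = (inner ℝ v w : ℝ)}} := by
  refine ⟨0, fun c hc => ?_⟩
  obtain ⟨v, _, _, rfl⟩ := hc
  exact sSup_innSet_nonneg v hW

lemma cVal_nonneg {V W : Submodule ℝ E} (hV : V ≠ ⊥) (hW : W ≠ ⊥) :
    0 ≤ cVal V W := by
  refine le_csInf (cSet_nonempty hV W) fun c hc => ?_
  obtain ⟨v, _, _, rfl⟩ := hc
  exact sSup_innSet_nonneg v hW

lemma cVal_le_one {V W : Submodule ℝ E} (hV : V ≠ ⊥) (hW : W ≠ ⊥) :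
    cVal V W ≤ 1 := by
  obtain ⟨v, hv, hv1⟩ := exists_unit_of_ne_bot hV
  exact le_trans (csInf_le (cSet_bddBelow V hW) ⟨v, hv, hv1, rfl⟩)
    (sSup_innSet_le_one hv1 hW)

lemma cVal_sub_le {V₁ W₁ V₂ W₂ : Submodule ℝ E} {δ : ℝ}
    (hV1 : V₁ ≠ ⊥) (hW1 : W₁ ≠ ⊥) (hV2 : V₂ ≠ ⊥) (hW2 : W₂ ≠ ⊥)
    (H1 : ∀ v ∈ V₂, ‖v‖ = 1 → ∃ v' ∈ V₁, ‖v'‖ = 1 ∧ ‖v - v'‖ ≤ δ)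
    (H2 : ∀ w ∈ W₁, ‖w‖ = 1 → ∃ w' ∈ W₂, ‖w'‖ = 1 ∧ ‖w - w'‖ ≤ δ) :
    cVal V₁ W₁ - 2*δ ≤ cVal V₂ W₂ := by
  refine le_csInf (cSet_nonempty hV2 W₂) fun c hc => ?_
  obtain ⟨v₂, hv₂, hv₂1, rfl⟩ := hc
  obtain ⟨v₁, hv₁, hv₁1, hclose⟩ := H1 v₂ hv₂ hv₂1
  have step1 : cVal V₁ W₁ ≤ sSup {r : ℝ | ∃ w ∈ W₁, ‖w‖ = 1 ∧ r = (inner ℝ v₁ w : ℝ)} :=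
    csInf_le (cSet_bddBelow V₁ hW1) ⟨v₁, hv₁, hv₁1, rfl⟩
  have step2 : sSup {r : ℝ | ∃ w ∈ W₁, ‖w‖ = 1 ∧ r = (inner ℝ v₁ w : ℝ)} ≤
      sSup {r : ℝ | ∃ w ∈ W₂, ‖w‖ = 1 ∧ r = (inner ℝ v₂ w : ℝ)} + 2*δ := by
    refine csSup_le (innSet_nonempty v₁ hW1) fun r hr => ?_
    obtain ⟨w₁, hw₁, hw₁1, rfl⟩ := hr
    obtain ⟨w₂, hw₂, hw₂1, hwclose⟩ := H2 w₁ hw₁ hw₁1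
    have key : (inner ℝ v₁ w₁ : ℝ) ≤ (inner ℝ v₂ w₂ : ℝ) + 2*δ := by
      have e1 : (inner ℝ v₁ w₁ : ℝ) - (inner ℝ v₂ w₂ : ℝ)
          = (inner ℝ (v₁ - v₂) w₁ : ℝ) + (inner ℝ v₂ (w₁ - w₂) : ℝ) := by
        rw [inner_sub_left, inner_sub_right]; ring
      have b1 : (inner ℝ (v₁ - v₂) w₁ : ℝ) ≤ δ := by
        calc (inner ℝ (v₁ - v₂) w₁ : ℝ) ≤ ‖v₁ - v₂‖ * ‖w₁‖ := real_inner_le_norm _ _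
          _ = ‖v₂ - v₁‖ := by rw [hw₁1, mul_one, norm_sub_rev]
          _ ≤ δ := hclose
      have b2 : (inner ℝ v₂ (w₁ - w₂) : ℝ) ≤ δ := by
        calc (inner ℝ v₂ (w₁ - w₂) : ℝ) ≤ ‖v₂‖ * ‖w₁ - w₂‖ := real_inner_le_norm _ _
          _ = ‖w₁ - w₂‖ := by rw [hv₂1, one_mul]
          _ ≤ δ := hwclose
      linarith
    exact le_trans key (by
      have := le_csSup (innSet_bddAbove v₂ W₂) (⟨w₂, hw₂, hw₂1, rfl⟩ :
        (inner ℝ v₂ w₂ : ℝ) ∈ {r : ℝ | ∃ w ∈ W₂, ‖w‖ = 1 ∧ r = (inner ℝ v₂ w : ℝ)})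
      linarith)
  linarith

lemma abs_cVal_sub_le {V₁ W₁ V₂ W₂ : Submodule ℝ E} {δ : ℝ}
    (hV1 : V₁ ≠ ⊥) (hW1 : W₁ ≠ ⊥) (hV2 : V₂ ≠ ⊥) (hW2 : W₂ ≠ ⊥)
    (H1 : ∀ v ∈ V₂, ‖v‖ = 1 → ∃ v' ∈ V₁, ‖v'‖ = 1 ∧ ‖v - v'‖ ≤ δ)
    (H1' : ∀ v ∈ V₁, ‖v‖ = 1 → ∃ v' ∈ V₂, ‖v'‖ = 1 ∧ ‖v - v'‖ ≤ δ)
    (H2 : ∀ w ∈ W₁, ‖w‖ = 1 → ∃ w' ∈ W₂, ‖w'‖ = 1 ∧ ‖w - w'‖ ≤ δ)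
    (H2' : ∀ w ∈ W₂, ‖w‖ = 1 → ∃ w' ∈ W₁, ‖w'‖ = 1 ∧ ‖w - w'‖ ≤ δ) :
    |cVal V₁ W₁ - cVal V₂ W₂| ≤ 2*δ := by
  rw [abs_le]
  constructor
  · have := cVal_sub_le hV2 hW2 hV1 hW1 H1' H2'
    linarith
  · have := cVal_sub_le hV1 hW1 hV2 hW2 H1 H2
    linarith

lemma norm_normalize_sub {a b : E} (ha : a ≠ 0) (hb : b ≠ 0) :
    ‖‖a‖⁻¹ • a - ‖b‖⁻¹ • b‖ ≤ 2 * ‖a - b‖ / ‖a‖ := by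
  have hα : (0:ℝ) < ‖a‖ := norm_pos_iff.mpr ha
  have hβ : (0:ℝ) < ‖b‖ := norm_pos_iff.mpr hb
  have h1 : ‖‖a‖⁻¹ • a - ‖a‖⁻¹ • b‖ = ‖a - b‖ / ‖a‖ := by
    rw [← smul_sub, norm_smul, norm_inv, norm_norm]
    rw [div_eq_inv_mul]
  have h2 : ‖‖a‖⁻¹ • b - ‖b‖⁻¹ • b‖ ≤ ‖a - b‖ / ‖a‖ := by
    rw [← sub_smul, norm_smul, Real.norm_eq_abs]
    have e : ‖a‖⁻¹ - ‖b‖⁻¹ = (‖b‖ - ‖a‖) / (‖a‖ * ‖b‖) := by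
      field_simp
    rw [e, abs_div, abs_of_pos (by positivity : (0:ℝ) < ‖a‖ * ‖b‖)]
    have hb1 : |‖b‖ - ‖a‖| ≤ ‖a - b‖ := by
      rw [← norm_sub_rev]
      exact abs_norm_sub_norm_le b a
    calc |‖b‖ - ‖a‖| / (‖a‖ * ‖b‖) * ‖b‖ = |‖b‖ - ‖a‖| / ‖a‖ := by
          field_simp
      _ ≤ ‖a - b‖ / ‖a‖ := by
          gcongr
  calc ‖‖a‖⁻¹ • a - ‖b‖⁻¹ • b‖
      ≤ ‖‖a‖⁻¹ • a - ‖a‖⁻¹ • b‖ + ‖‖a‖⁻¹ • b - ‖b‖⁻¹ • b‖ := norm_sub_le_norm_sub_add_norm_sub _ _ _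
    _ ≤ ‖a - b‖ / ‖a‖ + ‖a - b‖ / ‖a‖ := by rw [h1]; linarith
    _ = 2 * ‖a - b‖ / ‖a‖ := by ring
end CVal

section PhiProj
variable {d : ℕ}

lemma Phi_nn (A : ℕ → (Euc d →L[ℝ] Euc d)) (n : ℕ) : Phi A n n = 1 := by
  simp [Phi, PhiF]

lemma Phi_n0 (A : ℕ → (Euc d →L[ℝ] Euc d)) (n : ℕ) : Phi A n 0 = PhiF A 0 n := by
  simp [Phi]

lemma isUnit_PhiF {A : ℕ → (Euc d →L[ℝ] Euc d)} (hA : ∀ n, IsUnit (A n)) (m n : ℕ) :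
    IsUnit (PhiF A m n) := by
  induction n with
  | zero => exact isUnit_one
  | succ n ih => exact (hA (m + n)).mul ih

lemma Phi_left_inv {A : ℕ → (Euc d →L[ℝ] Euc d)} (hA : ∀ n, IsUnit (A n)) (n : ℕ) :
    Phi A 0 n ∘L Phi A n 0 = 1 := by
  rcases Nat.eq_zero_or_pos n with rfl | hn
  · rw [Phi_nn, ← ContinuousLinearMap.mul_def, one_mul]
  · have h1 : Phi A 0 n = Ring.inverse (PhiF A 0 n) := by
      rw [Phi, if_neg (by omega), Nat.sub_zero]
    have h2 : Phi A n 0 = PhiF A 0 n := Phi_n0 A n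
    rw [h1, h2, ← ContinuousLinearMap.mul_def]
    exact Ring.inverse_mul_cancel _ (isUnit_PhiF hA 0 n)

lemma Phi_left_inv_apply {A : ℕ → (Euc d →L[ℝ] Euc d)} (hA : ∀ n, IsUnit (A n)) (n : ℕ)
    (x : Euc d) : Phi A 0 n (Phi A n 0 x) = x := by
  have := DFunLike.congr_fun (Phi_left_inv hA n) x
  simpa using this

lemma Phi_inj {A : ℕ → (Euc d →L[ℝ] Euc d)} (hA : ∀ n, IsUnit (A n)) (n : ℕ)
    {x : Euc d} (hx : x ≠ 0) : Phi A n 0 x ≠ 0 := by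
  intro h
  apply hx
  have := Phi_left_inv_apply hA n x
  rw [h] at this
  simpa using this.symm

variable {P : ℕ → ℕ → (Euc d →L[ℝ] Euc d)} {ℓ : ℕ}

section QAlgebra
variable (hproj : ∀ n i, 1 ≤ i → i ≤ ℓ + 1 → P n i ∘L P n i = P n i)
  (hrange : ∀ n i, 1 ≤ i → i ≤ ℓ → LinearMap.range (P n (i + 1) : Euc d →ₗ[ℝ] Euc d) ≤ LinearMap.range (P n i : Euc d →ₗ[ℝ] Euc d))
  (hker : ∀ n i, 1 ≤ i → i ≤ ℓ → LinearMap.ker (P n i : Euc d →ₗ[ℝ] Euc d) ≤ LinearMap.ker (P n (i + 1) : Euc d →ₗ[ℝ] Euc d))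

include hproj in
lemma Q_fix {k i : ℕ} (h1 : 1 ≤ i) (h2 : i ≤ ℓ + 1) {x : Euc d}
    (hx : x ∈ LinearMap.range (P k i : Euc d →ₗ[ℝ] Euc d)) : P k i x = x := by
  obtain ⟨y, rfl⟩ := hx
  exact DFunLike.congr_fun (hproj k i h1 h2) y

include hproj hrange in
lemma Q_range_mono {k i j : ℕ} (h1 : 1 ≤ i) (hij : i ≤ j) (hj : j ≤ ℓ + 1) :
    LinearMap.range (P k j : Euc d →ₗ[ℝ] Euc d) ≤ LinearMap.range (P k i : Euc d →ₗ[ℝ] Euc d) := by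
  induction j, hij using Nat.le_induction with
  | base => exact le_rfl
  | succ j hij ih =>
      exact le_trans (hrange k j (le_trans h1 hij) (by omega)) (ih (by omega))

include hproj hker in
lemma Q_ker_mono {k i j : ℕ} (h1 : 1 ≤ i) (hij : i ≤ j) (hj : j ≤ ℓ + 1) :
    LinearMap.ker (P k i : Euc d →ₗ[ℝ] Euc d) ≤ LinearMap.ker (P k j : Euc d →ₗ[ℝ] Euc d) := by
  induction j, hij using Nat.le_induction with
  | base => exact le_rfl
  | succ j hij ih =>
      exact le_trans (ih (by omega)) (hker k j (le_trans h1 hij) (by omega))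

include hproj hrange in
lemma Q_comp_ge {k i j : ℕ} (h1 : 1 ≤ i) (hij : i ≤ j) (hj : j ≤ ℓ + 1) (x : Euc d) :
    P k i (P k j x) = P k j x :=
  Q_fix hproj h1 (by omega)
    (Q_range_mono hproj hrange h1 hij hj (LinearMap.mem_range_self _ x))

include hproj hker in
lemma Q_comp_le {k i j : ℕ} (h1 : 1 ≤ j) (hij : j ≤ i) (hi : i ≤ ℓ + 1) (x : Euc d) :
    P k i (P k j x) = P k i x := by
  have hxker : x - P k j x ∈ LinearMap.ker (P k j : Euc d →ₗ[ℝ] Euc d) := by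
    rw [LinearMap.mem_ker]
    have := DFunLike.congr_fun (hproj k j h1 (by omega)) x
    simp only [ContinuousLinearMap.coe_comp', Function.comp_apply] at this
    simp [map_sub, this]
  have := Q_ker_mono hproj hker h1 hij hi hxker
  rw [LinearMap.mem_ker] at this
  simp only [map_sub] at this
  have := sub_eq_zero.mp this
  -- this : P k i x - P k i (P k j x) = 0 → equality
  linear_combination (norm := module) -this

include hproj hrange hker in
lemma fiberP_orth {k i j : ℕ} (h1 : 1 ≤ i) (hi : i ≤ ℓ) (h1j : 1 ≤ j) (hj : j ≤ ℓ)
    (hij : i ≠ j) (x : Euc d) : fiberP P k i (fiberP P k j x) = 0 := by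
  simp only [fiberP, ContinuousLinearMap.sub_apply, map_sub]
  rcases lt_or_gt_of_ne hij with h | h
  · have e1 : P k i (P k j x) = P k j x := Q_comp_ge hproj hrange h1 (by omega) (by omega) x
    have e2 : P k i (P k (j+1) x) = P k (j+1) x :=
      Q_comp_ge hproj hrange h1 (by omega) (by omega) x
    have e3 : P k (i+1) (P k j x) = P k j x :=
      Q_comp_ge hproj hrange (by omega) (by omega) (by omega) x
    have e4 : P k (i+1) (P k (j+1) x) = P k (j+1) x :=
      Q_comp_ge hproj hrange (by omega) (by omega) (by omega) x
    rw [e1, e2, e3, e4]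
    abel
  · have e1 : P k i (P k j x) = P k i x := Q_comp_le hproj hker h1j (by omega) (by omega) x
    have e2 : P k i (P k (j+1) x) = P k i x :=
      Q_comp_le hproj hker (by omega) (by omega) (by omega) x
    have e3 : P k (i+1) (P k j x) = P k (i+1) x :=
      Q_comp_le hproj hker h1j (by omega) (by omega) x
    have e4 : P k (i+1) (P k (j+1) x) = P k (i+1) x :=
      Q_comp_le hproj hker (by omega) (by omega) (by omega) x
    rw [e1, e2, e3, e4]
    abel

include hproj hrange hker in
lemma fiberP_idem {k i : ℕ} (h1 : 1 ≤ i) (hi : i ≤ ℓ) (x : Euc d) :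
    fiberP P k i (fiberP P k i x) = fiberP P k i x := by
  simp only [fiberP, ContinuousLinearMap.sub_apply, map_sub]
  have e1 : P k i (P k i x) = P k i x := Q_comp_ge hproj hrange h1 le_rfl (by omega) x
  have e2 : P k i (P k (i+1) x) = P k (i+1) x :=
    Q_comp_ge hproj hrange h1 (by omega) (by omega) x
  have e3 : P k (i+1) (P k i x) = P k (i+1) x :=
    Q_comp_le hproj hker h1 (by omega) (by omega) x
  have e4 : P k (i+1) (P k (i+1) x) = P k (i+1) x :=
    Q_comp_ge hproj hrange (by omega) le_rfl (by omega) x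
  rw [e1, e2, e3, e4]
  abel

include hproj hrange in
lemma Q_fiber_fix {k i : ℕ} (h1 : 1 ≤ i) (hi : i ≤ ℓ) (x : Euc d) :
    P k i (fiberP P k i x) = fiberP P k i x := by
  simp only [fiberP, ContinuousLinearMap.sub_apply, map_sub]
  have e1 : P k i (P k i x) = P k i x := Q_comp_ge hproj hrange h1 le_rfl (by omega) x
  have e2 : P k i (P k (i+1) x) = P k (i+1) x :=
    Q_comp_ge hproj hrange h1 (by omega) (by omega) x
  rw [e1, e2]

include hproj hker in
lemma Q_succ_fiber {k i : ℕ} (h1 : 1 ≤ i) (hi : i ≤ ℓ) (x : Euc d) :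
    P k (i+1) (fiberP P k i x) = 0 := by
  simp only [fiberP, ContinuousLinearMap.sub_apply, map_sub]
  have e1 : P k (i+1) (P k i x) = P k (i+1) x :=
    Q_comp_le hproj hker h1 (by omega) (by omega) x
  have e2 : P k (i+1) (P k (i+1) x) = P k (i+1) x := by
    have := DFunLike.congr_fun (hproj k (i+1) (by omega) (by omega)) x
    simpa using this
  rw [e1, e2]
  abel
end QAlgebra

lemma fiberP_sum (hP1 : ∀ n, P n 1 = 1) (hPl : ∀ n, P n (ℓ + 1) = 0) (k : ℕ) (x : Euc d) :
    ∑ i ∈ Finset.Icc 1 ℓ, fiberP P k i x = x := by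
  rw [myIccRange (fun i => fiberP P k i x) ℓ]
  have : ∀ i, fiberP P k (1 + i) x = P k (1 + i) x - P k (1 + (i+1)) x := by
    intro i
    rfl
  rw [Finset.sum_congr rfl fun i _ => this i, Finset.sum_range_sub' (fun i => P k (1 + i) x) ℓ]
  rw [show (1 + ℓ) = ℓ + 1 from Nat.add_comm 1 ℓ, hPl, hP1]
  simp only [ContinuousLinearMap.one_apply, ContinuousLinearMap.zero_apply, sub_zero]

end PhiProj

section Estimates
variable {d : ℕ} {A : ℕ → (Euc d →L[ℝ] Euc d)} {P : ℕ → ℕ → (Euc d →L[ℝ] Euc d)}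
  {ℓ : ℕ} {K : ℝ} {σm σp : ℕ → ℝ}

lemma normP_le (hK : 1 ≤ K) (hP1 : ∀ n, P n 1 = 1)
    (hbndS : ∀ i, 1 ≤ i → i ≤ ℓ → ∀ n m : ℕ, m ≤ n →
      ‖Phi A n m ∘L P m (i + 1)‖ ≤ K * (if i = ℓ then (0 : ℝ) else σp (i + 1)) ^ (n - m))
    (n i : ℕ) (h1 : 1 ≤ i) (h2 : i ≤ ℓ + 1) : ‖P n i‖ ≤ K := by
  rcases i with _ | i'
  · omega
  rcases Nat.eq_zero_or_pos i' with rfl | hi'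
  · rw [hP1]
    calc ‖(1 : Euc d →L[ℝ] Euc d)‖ ≤ 1 := ContinuousLinearMap.norm_id_le
      _ ≤ K := hK
  · have := hbndS i' hi' (by omega) n n le_rfl
    rw [Phi_nn, Nat.sub_self, pow_zero, mul_one] at this
    calc ‖P n (i' + 1)‖ = ‖(1 : Euc d →L[ℝ] Euc d) ∘L P n (i' + 1)‖ := by
          rw [← ContinuousLinearMap.mul_def, one_mul]
      _ ≤ K := this

lemma norm_fiberP_le (hK : 1 ≤ K) (hP1 : ∀ n, P n 1 = 1)
    (hbndS : ∀ i, 1 ≤ i → i ≤ ℓ → ∀ n m : ℕ, m ≤ n →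
      ‖Phi A n m ∘L P m (i + 1)‖ ≤ K * (if i = ℓ then (0 : ℝ) else σp (i + 1)) ^ (n - m))
    (n i : ℕ) (h1 : 1 ≤ i) (h2 : i ≤ ℓ) : ‖fiberP P n i‖ ≤ 2 * K := by
  calc ‖fiberP P n i‖ ≤ ‖P n i‖ + ‖P n (i + 1)‖ := norm_sub_le _ _
    _ ≤ K + K := add_le_add (normP_le hK hP1 hbndS n i h1 (by omega))
        (normP_le hK hP1 hbndS n (i+1) (by omega) (by omega))
    _ = 2 * K := by ring

lemma comm_fiber
    (hcomm : ∀ n m i, 1 ≤ i → i ≤ ℓ + 1 → P n i ∘L Phi A n m = Phi A n m ∘L P m i)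
    (n i : ℕ) (h1 : 1 ≤ i) (h2 : i ≤ ℓ) (x : Euc d) :
    fiberP P n i (Phi A n 0 x) = Phi A n 0 (fiberP P 0 i x) := by
  have c1 := DFunLike.congr_fun (hcomm n 0 i h1 (by omega)) x
  have c2 := DFunLike.congr_fun (hcomm n 0 (i+1) (by omega) (by omega)) x
  simp only [ContinuousLinearMap.coe_comp', Function.comp_apply] at c1 c2
  simp only [fiberP, ContinuousLinearMap.sub_apply, map_sub, c1, c2]

lemma growth_lower (hA : ∀ n, IsUnit (A n)) (hK : 1 ≤ K)
    (hσ0 : ∀ i, 1 ≤ i → i ≤ ℓ → 0 < σm i)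
    (hproj : ∀ n i, 1 ≤ i → i ≤ ℓ + 1 → P n i ∘L P n i = P n i)
    (hker : ∀ n i, 1 ≤ i → i ≤ ℓ → LinearMap.ker (P n i : Euc d →ₗ[ℝ] Euc d) ≤ LinearMap.ker (P n (i + 1) : Euc d →ₗ[ℝ] Euc d))
    (hcomm : ∀ n m i, 1 ≤ i → i ≤ ℓ + 1 → P n i ∘L Phi A n m = Phi A n m ∘L P m i)
    (hbndU : ∀ i, 1 ≤ i → i ≤ ℓ → ∀ n m : ℕ, m ≤ n →
      ‖Phi A m n ∘L (1 - P n (i + 1))‖ ≤ K * (σm i ^ (n - m))⁻¹)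
    (i : ℕ) (h1 : 1 ≤ i) (h2 : i ≤ ℓ) (n : ℕ) {z : Euc d} :
    σm i ^ n * ‖fiberP P 0 i z‖ ≤ K * ‖Phi A n 0 (fiberP P 0 i z)‖ := by
  set y := fiberP P 0 i z with hy
  have hQ : P 0 (i+1) y = 0 := Q_succ_fiber hproj hker h1 h2 z
  have hcy : (1 - P n (i+1)) (Phi A n 0 y) = Phi A n 0 y := by
    have c := DFunLike.congr_fun (hcomm n 0 (i+1) (by omega) (by omega)) y
    simp only [ContinuousLinearMap.coe_comp', Function.comp_apply] at c
    simp [ContinuousLinearMap.sub_apply, c, hQ]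
  have hnorm : ‖y‖ ≤ K * (σm i ^ n)⁻¹ * ‖Phi A n 0 y‖ := by
    have hb := hbndU i h1 h2 n 0 (Nat.zero_le n)
    rw [Nat.sub_zero] at hb
    calc ‖y‖ = ‖(Phi A 0 n ∘L (1 - P n (i+1))) (Phi A n 0 y)‖ := by
          simp only [ContinuousLinearMap.coe_comp', Function.comp_apply, hcy]
          rw [Phi_left_inv_apply hA]
      _ ≤ ‖Phi A 0 n ∘L (1 - P n (i+1))‖ * ‖Phi A n 0 y‖ :=
          ContinuousLinearMap.le_opNorm _ _
      _ ≤ K * (σm i ^ n)⁻¹ * ‖Phi A n 0 y‖ := by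
          apply mul_le_mul_of_nonneg_right hb (norm_nonneg _)
  have hσn : (0:ℝ) < σm i ^ n := pow_pos (hσ0 i h1 h2) n
  calc σm i ^ n * ‖y‖ ≤ σm i ^ n * (K * (σm i ^ n)⁻¹ * ‖Phi A n 0 y‖) :=
        mul_le_mul_of_nonneg_left hnorm (le_of_lt hσn)
    _ = K * ‖Phi A n 0 y‖ := by field_simp

lemma decay_upper
    (hbndS : ∀ i, 1 ≤ i → i ≤ ℓ → ∀ n m : ℕ, m ≤ n →
      ‖Phi A n m ∘L P m (i + 1)‖ ≤ K * (if i = ℓ then (0 : ℝ) else σp (i + 1)) ^ (n - m))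
    (i : ℕ) (h1 : 1 ≤ i) (h2 : i ≤ ℓ) (n : ℕ) (x : Euc d) :
    ‖Phi A n 0 (P 0 (i+1) x)‖ ≤ K * (if i = ℓ then (0 : ℝ) else σp (i + 1)) ^ n * ‖x‖ := by
  have hb := hbndS i h1 h2 n 0 (Nat.zero_le n)
  rw [Nat.sub_zero] at hb
  calc ‖Phi A n 0 (P 0 (i+1) x)‖ = ‖(Phi A n 0 ∘L P 0 (i+1)) x‖ := rfl
    _ ≤ ‖Phi A n 0 ∘L P 0 (i+1)‖ * ‖x‖ := ContinuousLinearMap.le_opNorm _ _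
    _ ≤ K * (if i = ℓ then (0 : ℝ) else σp (i + 1)) ^ n * ‖x‖ :=
        mul_le_mul_of_nonneg_right hb (norm_nonneg _)
end Estimates

section Construction
variable {d : ℕ}

noncomputable def prL (K : Submodule ℝ (Euc d)) : Euc d →L[ℝ] Euc d :=
  K.subtypeL ∘L K.orthogonalProjectionOnto

lemma prL_mem (K : Submodule ℝ (Euc d)) (x : Euc d) : prL K x ∈ K := by
  simp [prL]

lemma prL_eq_self {K : Submodule ℝ (Euc d)} {x : Euc d} (h : x ∈ K) : prL K x = x := by
  simp only [prL, ContinuousLinearMap.coe_comp', Function.comp_apply,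
    Submodule.subtypeL_apply]
  exact Submodule.starProjection_eq_self_iff.mpr h

lemma prL_eq_zero_iff {K : Submodule ℝ (Euc d)} {x : Euc d} : prL K x = 0 ↔ x ∈ Kᗮ := by
  simp only [prL, ContinuousLinearMap.coe_comp', Function.comp_apply,
    Submodule.subtypeL_apply, Submodule.coe_eq_zero]
  exact Submodule.orthogonalProjectionOnto_eq_zero_iff

lemma prL_prL {U W : Submodule ℝ (Euc d)} (h : U ≤ W) (x : Euc d) :
    prL U (prL W x) = prL U x := by
  simp only [prL, ContinuousLinearMap.coe_comp', Function.comp_apply,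
    Submodule.subtypeL_apply]
  exact congrArg _ (Submodule.orthogonalProjectionOnto_starProjection_of_le h x)

lemma prL_bot (x : Euc d) : prL (⊥ : Submodule ℝ (Euc d)) x = 0 := by
  have := prL_mem (⊥ : Submodule ℝ (Euc d)) x
  simpa using this

variable (P : ℕ → ℕ → (Euc d →L[ℝ] Euc d)) (V : Submodule ℝ (Euc d))

noncomputable def Vfil (i : ℕ) : Submodule ℝ (Euc d) := LinearMap.range (P 0 i : Euc d →ₗ[ℝ] Euc d) ⊓ V

noncomputable def uMap (i : ℕ) : Euc d →L[ℝ] Euc d :=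
  prL (Vfil P V i) - prL (Vfil P V (i + 1))

variable (ℓ : ℕ)

noncomputable def LMap : Euc d →L[ℝ] Euc d :=
  ∑ i ∈ Finset.Icc 1 ℓ, fiberP P 0 i ∘L uMap P V i

variable {P V ℓ}
variable (hproj : ∀ n i, 1 ≤ i → i ≤ ℓ + 1 → P n i ∘L P n i = P n i)
  (hP1 : ∀ n, P n 1 = 1) (hPl : ∀ n, P n (ℓ + 1) = 0)
  (hrange : ∀ n i, 1 ≤ i → i ≤ ℓ → LinearMap.range (P n (i + 1) : Euc d →ₗ[ℝ] Euc d) ≤ LinearMap.range (P n i : Euc d →ₗ[ℝ] Euc d))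
  (hker : ∀ n i, 1 ≤ i → i ≤ ℓ → LinearMap.ker (P n i : Euc d →ₗ[ℝ] Euc d) ≤ LinearMap.ker (P n (i + 1) : Euc d →ₗ[ℝ] Euc d))

include hproj hrange in
lemma Vfil_mono {i j : ℕ} (h1 : 1 ≤ i) (hij : i ≤ j) (hj : j ≤ ℓ + 1) :
    Vfil P V j ≤ Vfil P V i :=
  inf_le_inf (Q_range_mono hproj hrange h1 hij hj) le_rfl

include hP1 in
lemma Vfil_one : Vfil P V 1 = V := by
  have : LinearMap.range (P 0 1 : Euc d →ₗ[ℝ] Euc d) = ⊤ := by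
    rw [hP1]
    exact LinearMap.range_eq_top.mpr fun x => ⟨x, rfl⟩
  rw [Vfil, this, top_inf_eq]

include hPl in
lemma Vfil_top : Vfil P V (ℓ + 1) = ⊥ := by
  have : LinearMap.range (P 0 (ℓ + 1) : Euc d →ₗ[ℝ] Euc d) = ⊥ := by
    rw [hPl]
    exact LinearMap.range_eq_bot.mpr rfl
  rw [Vfil, this, bot_inf_eq]

include hproj hrange in
lemma uMap_mem {i : ℕ} (h1 : 1 ≤ i) (hi : i ≤ ℓ) (x : Euc d) :
    uMap P V i x ∈ Vfil P V i := by
  have m1 : prL (Vfil P V i) x ∈ Vfil P V i := prL_mem _ x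
  have m2 : prL (Vfil P V (i+1)) x ∈ Vfil P V i :=
    Vfil_mono hproj hrange h1 (by omega) (by omega) (prL_mem _ x)
  simpa [uMap, ContinuousLinearMap.sub_apply] using Submodule.sub_mem _ m1 m2

include hproj hrange in
lemma uMap_mem_V {i : ℕ} (h1 : 1 ≤ i) (hi : i ≤ ℓ) (x : Euc d) :
    uMap P V i x ∈ V :=
  (inf_le_right : Vfil P V i ≤ V) (uMap_mem hproj hrange h1 hi x)

include hproj hrange in
lemma uMap_orth {i : ℕ} (h1 : 1 ≤ i) (hi : i ≤ ℓ) (x : Euc d) :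
    uMap P V i x ∈ (Vfil P V (i+1))ᗮ := by
  rw [← prL_eq_zero_iff]
  have e1 : prL (Vfil P V (i+1)) (prL (Vfil P V i) x) = prL (Vfil P V (i+1)) x :=
    prL_prL (Vfil_mono hproj hrange h1 (by omega) (by omega)) x
  have e2 : prL (Vfil P V (i+1)) (prL (Vfil P V (i+1)) x) = prL (Vfil P V (i+1)) x :=
    prL_prL le_rfl x
  simp [uMap, ContinuousLinearMap.sub_apply, map_sub, e1, e2]

include hP1 hPl in
lemma uMap_sum {v : Euc d} (hv : v ∈ V) :
    ∑ i ∈ Finset.Icc 1 ℓ, uMap P V i v = v := by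
  rw [myIccRange (fun i => uMap P V i v) ℓ]
  have e : ∀ i, uMap P V (1 + i) v
      = prL (Vfil P V (1 + i)) v - prL (Vfil P V (1 + (i + 1))) v := by
    intro i
    rfl
  rw [Finset.sum_congr rfl fun i _ => e i,
    Finset.sum_range_sub' (fun i => prL (Vfil P V (1 + i)) v) ℓ]
  rw [show (1 + ℓ) = ℓ + 1 from Nat.add_comm 1 ℓ]
  have t1 : prL (Vfil P V 1) v = v := prL_eq_self (by rw [Vfil_one hP1]; exact hv)
  have t2 : prL (Vfil P V (ℓ + 1)) v = 0 := by
    rw [Vfil_top hPl]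
    exact prL_bot v
  rw [t1, t2, sub_zero]

include hproj hrange in
lemma fiberP_uMap_eq {i : ℕ} (h1 : 1 ≤ i) (hi : i ≤ ℓ) (x : Euc d) :
    fiberP P 0 i (uMap P V i x) = uMap P V i x - P 0 (i+1) (uMap P V i x) := by
  have : P 0 i (uMap P V i x) = uMap P V i x :=
    Q_fix hproj h1 (by omega) ((inf_le_left : Vfil P V i ≤ _) (uMap_mem hproj hrange h1 hi x))
  simp [fiberP, ContinuousLinearMap.sub_apply, this]

include hproj hrange in
lemma uMap_eq_zero_of_fiberP {i : ℕ} (h1 : 1 ≤ i) (hi : i ≤ ℓ) {x : Euc d}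
    (h : fiberP P 0 i (uMap P V i x) = 0) : uMap P V i x = 0 := by
  have heq := fiberP_uMap_eq hproj hrange h1 hi (V := V) x
  rw [h] at heq
  have hmem : uMap P V i x ∈ Vfil P V (i+1) := by
    constructor
    · exact ⟨uMap P V i x, (sub_eq_zero.mp heq.symm).symm⟩
    · exact uMap_mem_V hproj hrange h1 hi x
  have horth := uMap_orth hproj hrange h1 hi (V := V) x
  exact Submodule.disjoint_def.mp (Submodule.orthogonal_disjoint (Vfil P V (i+1)))
    _ hmem horth

end Construction

section Construction2
variable {d : ℕ} {P : ℕ → ℕ → (Euc d →L[ℝ] Euc d)} {V : Submodule ℝ (Euc d)} {ℓ : ℕ}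
variable (hproj : ∀ n i, 1 ≤ i → i ≤ ℓ + 1 → P n i ∘L P n i = P n i)
  (hP1 : ∀ n, P n 1 = 1) (hPl : ∀ n, P n (ℓ + 1) = 0)
  (hrange : ∀ n i, 1 ≤ i → i ≤ ℓ → LinearMap.range (P n (i + 1) : Euc d →ₗ[ℝ] Euc d) ≤ LinearMap.range (P n i : Euc d →ₗ[ℝ] Euc d))
  (hker : ∀ n i, 1 ≤ i → i ≤ ℓ → LinearMap.ker (P n i : Euc d →ₗ[ℝ] Euc d) ≤ LinearMap.ker (P n (i + 1) : Euc d →ₗ[ℝ] Euc d))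

include hproj hrange in
lemma uMap_uMap {i j : ℕ} (h1 : 1 ≤ i) (hi : i ≤ ℓ) (h1j : 1 ≤ j) (hj : j ≤ ℓ) (x : Euc d) :
    uMap P V j (uMap P V i x) = if j = i then uMap P V i x else 0 := by
  set u := uMap P V i x with hu
  have humem : u ∈ Vfil P V i := uMap_mem hproj hrange h1 hi x
  have huorth : u ∈ (Vfil P V (i+1))ᗮ := uMap_orth hproj hrange h1 hi x
  rcases lt_trichotomy j i with h | h | h
  · rw [if_neg (by omega)]
    have e1 : prL (Vfil P V j) u = u :=
      prL_eq_self (Vfil_mono hproj hrange h1j (by omega) (by omega) humem)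
    have e2 : prL (Vfil P V (j+1)) u = u :=
      prL_eq_self (Vfil_mono hproj hrange (by omega) (by omega) (by omega) humem)
    simp [uMap, ContinuousLinearMap.sub_apply, e1, e2]
  · subst h
    rw [if_pos rfl]
    have e1 : prL (Vfil P V j) u = u := prL_eq_self humem
    have e2 : prL (Vfil P V (j+1)) u = 0 := prL_eq_zero_iff.mpr huorth
    simp [uMap, ContinuousLinearMap.sub_apply, e1, e2]
  · rw [if_neg (by omega)]
    have hle1 : Vfil P V j ≤ Vfil P V (i+1) :=
      Vfil_mono hproj hrange (by omega) (by omega) (by omega)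
    have hle2 : Vfil P V (j+1) ≤ Vfil P V (i+1) :=
      Vfil_mono hproj hrange (by omega) (by omega) (by omega)
    have e1 : prL (Vfil P V j) u = 0 :=
      prL_eq_zero_iff.mpr (Submodule.orthogonal_le hle1 huorth)
    have e2 : prL (Vfil P V (j+1)) u = 0 :=
      prL_eq_zero_iff.mpr (Submodule.orthogonal_le hle2 huorth)
    simp [uMap, ContinuousLinearMap.sub_apply, e1, e2]

lemma LMap_apply (P : ℕ → ℕ → (Euc d →L[ℝ] Euc d)) (V : Submodule ℝ (Euc d)) (ℓ : ℕ)
    (x : Euc d) : LMap P V ℓ x = ∑ i ∈ Finset.Icc 1 ℓ, fiberP P 0 i (uMap P V i x) := by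
  simp [LMap, ContinuousLinearMap.sum_apply]

include hproj hrange hker in
lemma fiberP_LMap {k : ℕ} (h1 : 1 ≤ k) (hk : k ≤ ℓ) (x : Euc d) :
    fiberP P 0 k (LMap P V ℓ x) = fiberP P 0 k (uMap P V k x) := by
  rw [LMap_apply, map_sum]
  rw [Finset.sum_eq_single k]
  · exact fiberP_idem hproj hrange hker h1 hk _
  · intro j hj hne
    rw [Finset.mem_Icc] at hj
    exact fiberP_orth hproj hrange hker h1 hk hj.1 hj.2 (Ne.symm hne) _
  · intro h
    exact absurd (Finset.mem_Icc.mpr ⟨h1, hk⟩) h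

include hproj hrange in
lemma LMap_uMap {i : ℕ} (h1 : 1 ≤ i) (hi : i ≤ ℓ) (x : Euc d) :
    LMap P V ℓ (uMap P V i x) = fiberP P 0 i (uMap P V i x) := by
  rw [LMap_apply]
  rw [Finset.sum_eq_single i]
  · rw [uMap_uMap hproj hrange h1 hi h1 hi x, if_pos rfl]
  · intro j hj hne
    rw [Finset.mem_Icc] at hj
    rw [uMap_uMap hproj hrange h1 hi hj.1 hj.2 x, if_neg hne, map_zero]
  · intro h
    exact absurd (Finset.mem_Icc.mpr ⟨h1, hi⟩) h

include hproj hP1 hPl hrange hker in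
lemma LMap_inj {v : Euc d} (hv : v ∈ V) (h : LMap P V ℓ v = 0) : v = 0 := by
  have hz : ∀ k, 1 ≤ k → k ≤ ℓ → uMap P V k v = 0 := by
    intro k h1 hk
    apply uMap_eq_zero_of_fiberP hproj hrange h1 hk
    rw [← fiberP_LMap hproj hrange hker h1 hk, h, map_zero]
  rw [← uMap_sum hP1 hPl (V := V) hv]
  exact Finset.sum_eq_zero fun i hi => by
    rw [Finset.mem_Icc] at hi
    exact hz i hi.1 hi.2
end Construction2

section TraceSpace
variable {d : ℕ}

set_option synthInstance.maxHeartbeats 1000000 in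
lemma inj_bound (g : Euc d →L[ℝ] Euc d) (U : Submodule ℝ (Euc d))
    (hinj : ∀ x ∈ U, g x = 0 → x = 0) :
    ∃ c : ℝ, 0 ≤ c ∧ ∀ x ∈ U, ‖x‖ ≤ c * ‖g x‖ := by
  set φ : U →ₗ[ℝ] Euc d := g.toLinearMap.comp U.subtype with hφ
  have hφinj : Function.Injective φ := by
    rw [← LinearMap.ker_eq_bot, LinearMap.ker_eq_bot']
    intro m hm
    have : (m : Euc d) = 0 := hinj m m.2 hm
    exact Subtype.ext this
  set e := LinearEquiv.ofInjective φ hφinj with he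
  set ψ := (e.symm.toLinearMap).toContinuousLinearMap with hψ
  refine ⟨‖ψ‖, ContinuousLinearMap.opNorm_nonneg _, fun x hx => ?_⟩
  set y : U := ⟨x, hx⟩ with hy
  have hmem : g x ∈ LinearMap.range φ := ⟨y, rfl⟩
  set z : LinearMap.range φ := ⟨g x, hmem⟩ with hz
  have hez : e y = z := by
    apply Subtype.ext
    rfl
  have hψz : ψ z = y := by
    rw [← hez]
    simp [hψ]
  calc ‖x‖ = ‖y‖ := rfl
    _ = ‖ψ z‖ := by rw [hψz]
    _ ≤ ‖ψ‖ * ‖z‖ := ContinuousLinearMap.le_opNorm _ _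
    _ = ‖ψ‖ * ‖g x‖ := rfl

variable {P : ℕ → ℕ → (Euc d →L[ℝ] Euc d)} {V : Submodule ℝ (Euc d)} {ℓ : ℕ}
variable (hproj : ∀ n i, 1 ≤ i → i ≤ ℓ + 1 → P n i ∘L P n i = P n i)
  (hP1 : ∀ n, P n 1 = 1) (hPl : ∀ n, P n (ℓ + 1) = 0)
  (hrange : ∀ n i, 1 ≤ i → i ≤ ℓ → LinearMap.range (P n (i + 1) : Euc d →ₗ[ℝ] Euc d) ≤ LinearMap.range (P n i : Euc d →ₗ[ℝ] Euc d))
  (hker : ∀ n i, 1 ≤ i → i ≤ ℓ → LinearMap.ker (P n i : Euc d →ₗ[ℝ] Euc d) ≤ LinearMap.ker (P n (i + 1) : Euc d →ₗ[ℝ] Euc d))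

include hproj hrange in
lemma uMap_norm_bound (i : ℕ) (h1 : 1 ≤ i) (hi : i ≤ ℓ) :
    ∃ c : ℝ, 0 ≤ c ∧ ∀ x : Euc d,
      ‖uMap P V i x‖ ≤ c * ‖fiberP P 0 i (uMap P V i x)‖ := by
  have hinj : ∀ x ∈ LinearMap.range (uMap P V i : Euc d →ₗ[ℝ] Euc d), fiberP P 0 i x = 0 → x = 0 := by
    rintro x ⟨y, rfl⟩ hy
    exact uMap_eq_zero_of_fiberP hproj hrange h1 hi hy
  obtain ⟨c, hc0, hc⟩ := inj_bound (fiberP P 0 i) (LinearMap.range (uMap P V i : Euc d →ₗ[ℝ] Euc d)) hinj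
  exact ⟨c, hc0, fun x => hc _ (LinearMap.mem_range_self _ x)⟩

include hproj hrange in
lemma traceSpace_eq :
    V.map (LMap P V ℓ : Euc d →ₗ[ℝ] Euc d) = ⨆ i ∈ Finset.Icc 1 ℓ, V.map (fiberP P 0 i ∘L uMap P V i : Euc d →ₗ[ℝ] Euc d) := by
  apply le_antisymm
  · rintro x ⟨v, hv, rfl⟩
    simp only [ContinuousLinearMap.coe_coe]
    rw [LMap_apply]
    apply Submodule.sum_mem
    intro i hi
    have hWle : V.map (fiberP P 0 i ∘L uMap P V i : Euc d →ₗ[ℝ] Euc d) ≤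
        ⨆ i ∈ Finset.Icc 1 ℓ, V.map (fiberP P 0 i ∘L uMap P V i : Euc d →ₗ[ℝ] Euc d) := by
      apply le_biSup (fun i => V.map (fiberP P 0 i ∘L uMap P V i : Euc d →ₗ[ℝ] Euc d)) hi
    exact hWle ⟨v, hv, rfl⟩
  · apply iSup₂_le
    intro i hi
    rw [Finset.mem_Icc] at hi
    rintro x ⟨v, hv, rfl⟩
    refine ⟨uMap P V i v, uMap_mem_V hproj hrange hi.1 hi.2 v, ?_⟩
    simp only [ContinuousLinearMap.coe_coe]
    rw [LMap_uMap hproj hrange hi.1 hi.2]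
    rfl

include hproj hrange in
lemma traceSpace_isTrace : IsTraceAt P ℓ 0 (V.map (LMap P V ℓ : Euc d →ₗ[ℝ] Euc d)) := by
  refine ⟨fun i => V.map (fiberP P 0 i ∘L uMap P V i : Euc d →ₗ[ℝ] Euc d), fun i h1 hi => ?_,
    traceSpace_eq hproj hrange⟩
  rintro x ⟨v, hv, rfl⟩
  exact LinearMap.mem_range_self _ _

include hproj hP1 hPl hrange hker in
lemma traceSpace_finrank :
    Module.finrank ℝ (V.map (LMap P V ℓ : Euc d →ₗ[ℝ] Euc d)) = Module.finrank ℝ V := by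
  set f : V →ₗ[ℝ] Euc d := (LMap P V ℓ).toLinearMap.comp V.subtype with hf
  have hinj : Function.Injective f := by
    rw [← LinearMap.ker_eq_bot, LinearMap.ker_eq_bot']
    intro m hm
    exact Subtype.ext (LMap_inj hproj hP1 hPl hrange hker m.2 hm)
  have hr : LinearMap.range f = V.map (LMap P V ℓ : Euc d →ₗ[ℝ] Euc d) := by
    rw [hf, LinearMap.range_comp, Submodule.range_subtype]
  have := (LinearEquiv.ofInjective f hinj).finrank_eq
  rw [hr] at this
  exact this.symm
end TraceSpace

section KeyBound
variable {d : ℕ} {A : ℕ → (Euc d →L[ℝ] Euc d)} {P : ℕ → ℕ → (Euc d →L[ℝ] Euc d)}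
  {V : Submodule ℝ (Euc d)} {ℓ : ℕ} {K : ℝ} {σm σp : ℕ → ℝ}

lemma key_bound
    (hA : ∀ n, IsUnit (A n)) (hℓ : 1 ≤ ℓ) (hK : 1 ≤ K)
    (hσ0 : ∀ i, 1 ≤ i → i ≤ ℓ → 0 < σm i)
    (hσ1 : ∀ i, 1 ≤ i → i ≤ ℓ → σm i ≤ σp i)
    (hσ2 : ∀ i, 1 ≤ i → i < ℓ → σp (i + 1) < σm i)
    (hproj : ∀ n i, 1 ≤ i → i ≤ ℓ + 1 → P n i ∘L P n i = P n i)
    (hP1 : ∀ n, P n 1 = 1) (hPl : ∀ n, P n (ℓ + 1) = 0)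
    (hcomm : ∀ n m i, 1 ≤ i → i ≤ ℓ + 1 → P n i ∘L Phi A n m = Phi A n m ∘L P m i)
    (hrange : ∀ n i, 1 ≤ i → i ≤ ℓ → LinearMap.range (P n (i + 1) : Euc d →ₗ[ℝ] Euc d) ≤ LinearMap.range (P n i : Euc d →ₗ[ℝ] Euc d))
    (hker : ∀ n i, 1 ≤ i → i ≤ ℓ → LinearMap.ker (P n i : Euc d →ₗ[ℝ] Euc d) ≤ LinearMap.ker (P n (i + 1) : Euc d →ₗ[ℝ] Euc d))
    (hbndS : ∀ i, 1 ≤ i → i ≤ ℓ → ∀ n m : ℕ, m ≤ n →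
      ‖Phi A n m ∘L P m (i + 1)‖ ≤ K * (if i = ℓ then (0 : ℝ) else σp (i + 1)) ^ (n - m))
    (hbndU : ∀ i, 1 ≤ i → i ≤ ℓ → ∀ n m : ℕ, m ≤ n →
      ‖Phi A m n ∘L (1 - P n (i + 1))‖ ≤ K * (σm i ^ (n - m))⁻¹) :
    ∃ C lam : ℝ, 0 ≤ C ∧ 0 ≤ lam ∧ lam < 1 ∧ ∀ n : ℕ, ∀ v ∈ V,
      ‖Phi A n 0 v - Phi A n 0 (LMap P V ℓ v)‖
        ≤ C * lam ^ n * ‖Phi A n 0 (LMap P V ℓ v)‖ := by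
  have hIcc : (Finset.Icc 1 ℓ).Nonempty := ⟨1, Finset.mem_Icc.mpr ⟨le_rfl, hℓ⟩⟩
  set sig : ℕ → ℝ := fun i => if i = ℓ then (0 : ℝ) else σp (i + 1) with hsig
  have hsig_nonneg : ∀ i, 1 ≤ i → i ≤ ℓ → 0 ≤ sig i := by
    intro i h1 hi
    by_cases h : i = ℓ
    · simp [hsig, h]
    · have : i + 1 ≤ ℓ := by omega
      have := hσ0 (i+1) (by omega) this
      have := hσ1 (i+1) (by omega) ‹i + 1 ≤ ℓ›
      simp only [hsig, if_neg h]
      linarith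
  set lam : ℝ := (Finset.Icc 1 ℓ).sup' hIcc (fun i => sig i / σm i) with hlam
  have hlam_ge : ∀ i ∈ Finset.Icc 1 ℓ, sig i / σm i ≤ lam := fun i hi =>
    Finset.le_sup' (fun j => sig j / σm j) hi
  have hlam_nonneg : 0 ≤ lam := by
    have hmem : ℓ ∈ Finset.Icc 1 ℓ := Finset.mem_Icc.mpr ⟨hℓ, le_rfl⟩
    have := hlam_ge ℓ hmem
    simp only [hsig, if_pos rfl, zero_div] at this
    linarith
  have hlam_lt : lam < 1 := by
    rw [hlam, Finset.sup'_lt_iff]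
    intro i hi
    rw [Finset.mem_Icc] at hi
    by_cases h : i = ℓ
    · simp only [hsig, if_pos h, zero_div]; norm_num
    · rw [hsig]
      simp only [if_neg h]
      rw [div_lt_one (hσ0 i hi.1 hi.2)]
      exact hσ2 i hi.1 (by omega)
  have hsig_le : ∀ i, 1 ≤ i → i ≤ ℓ → sig i ≤ lam * σm i := by
    intro i h1 hi
    have h0 := hσ0 i h1 hi
    have := hlam_ge i (Finset.mem_Icc.mpr ⟨h1, hi⟩)
    calc sig i = sig i / σm i * σm i := by field_simp
      _ ≤ lam * σm i := mul_le_mul_of_nonneg_right this (le_of_lt h0)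
  -- injectivity constants
  have hcex : ∀ i : ℕ, ∃ c : ℝ, 0 ≤ c ∧ (1 ≤ i → i ≤ ℓ → ∀ x : Euc d,
      ‖uMap P V i x‖ ≤ c * ‖fiberP P 0 i (uMap P V i x)‖) := by
    intro i
    by_cases h : 1 ≤ i ∧ i ≤ ℓ
    · obtain ⟨c, hc0, hc⟩ := uMap_norm_bound (V := V) hproj hrange i h.1 h.2
      exact ⟨c, hc0, fun _ _ => hc⟩
    · exact ⟨0, le_rfl, fun h1 h2 => absurd ⟨h1, h2⟩ h⟩
  choose c hc0 hc using hcex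
  set C : ℝ := ∑ i ∈ Finset.Icc 1 ℓ, 2 * K ^ 3 * c i with hC
  have hK0' : (0:ℝ) < K := lt_of_lt_of_le zero_lt_one hK
  have hC0 : 0 ≤ C := Finset.sum_nonneg fun i _ =>
    mul_nonneg (by positivity) (hc0 i)
  refine ⟨C, lam, hC0, hlam_nonneg, hlam_lt, fun n v hv => ?_⟩
  set Lv := LMap P V ℓ v with hLv
  -- decomposition of the difference
  have hdiff : v - Lv = ∑ i ∈ Finset.Icc 1 ℓ, P 0 (i+1) (uMap P V i v) := by
    have h1 : v = ∑ i ∈ Finset.Icc 1 ℓ, uMap P V i v := (uMap_sum hP1 hPl hv).symm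
    have h2 : Lv = ∑ i ∈ Finset.Icc 1 ℓ, fiberP P 0 i (uMap P V i v) := LMap_apply P V ℓ v
    calc v - Lv
        = (∑ i ∈ Finset.Icc 1 ℓ, uMap P V i v)
            - ∑ i ∈ Finset.Icc 1 ℓ, fiberP P 0 i (uMap P V i v) := by
          rw [← h1, ← h2]
      _ = ∑ i ∈ Finset.Icc 1 ℓ, (uMap P V i v - fiberP P 0 i (uMap P V i v)) :=
          (Finset.sum_sub_distrib _ _).symm
      _ = ∑ i ∈ Finset.Icc 1 ℓ, P 0 (i+1) (uMap P V i v) := by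
          apply Finset.sum_congr rfl
          intro i hi
          rw [Finset.mem_Icc] at hi
          rw [fiberP_uMap_eq (V := V) hproj hrange hi.1 hi.2 v]
          abel
  -- termwise estimate
  have hterm : ∀ i ∈ Finset.Icc 1 ℓ,
      ‖Phi A n 0 (P 0 (i+1) (uMap P V i v))‖
        ≤ 2 * K ^ 3 * c i * lam ^ n * ‖Phi A n 0 Lv‖ := by
    intro i hi
    rw [Finset.mem_Icc] at hi
    set t := fiberP P 0 i (uMap P V i v) with ht
    have hK0 : (0:ℝ) < K := lt_of_lt_of_le zero_lt_one hK
    have A1 : ‖Phi A n 0 (P 0 (i+1) (uMap P V i v))‖ ≤ K * sig i ^ n * ‖uMap P V i v‖ :=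
      decay_upper hbndS i hi.1 hi.2 n _
    have A2 : ‖uMap P V i v‖ ≤ c i * ‖t‖ := hc i hi.1 hi.2 v
    have A3 : sig i ^ n ≤ lam ^ n * σm i ^ n := by
      calc sig i ^ n ≤ (lam * σm i) ^ n :=
            pow_le_pow_left₀ (hsig_nonneg i hi.1 hi.2) (hsig_le i hi.1 hi.2) n
        _ = lam ^ n * σm i ^ n := mul_pow _ _ _
    have A4 : σm i ^ n * ‖t‖ ≤ K * ‖Phi A n 0 t‖ :=
      growth_lower hA hK hσ0 hproj hker hcomm hbndU i hi.1 hi.2 n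
    have A5 : Phi A n 0 t = fiberP P n i (Phi A n 0 Lv) := by
      have e1 : t = fiberP P 0 i Lv := by
        rw [ht, hLv, fiberP_LMap hproj hrange hker hi.1 hi.2]
      rw [e1, comm_fiber hcomm n i hi.1 hi.2]
    have A6 : ‖fiberP P n i (Phi A n 0 Lv)‖ ≤ 2 * K * ‖Phi A n 0 Lv‖ := by
      calc ‖fiberP P n i (Phi A n 0 Lv)‖ ≤ ‖fiberP P n i‖ * ‖Phi A n 0 Lv‖ :=
            ContinuousLinearMap.le_opNorm _ _
        _ ≤ 2 * K * ‖Phi A n 0 Lv‖ :=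
            mul_le_mul_of_nonneg_right
              (norm_fiberP_le (A := A) (σp := σp) hK hP1 hbndS n i hi.1 hi.2) (norm_nonneg _)
    have hlamn : (0:ℝ) ≤ lam ^ n := pow_nonneg hlam_nonneg n
    have hsign : (0:ℝ) ≤ sig i ^ n := pow_nonneg (hsig_nonneg i hi.1 hi.2) n
    have hphit : ‖Phi A n 0 t‖ ≤ 2 * K * ‖Phi A n 0 Lv‖ := by rw [A5]; exact A6
    calc ‖Phi A n 0 (P 0 (i+1) (uMap P V i v))‖
        ≤ K * sig i ^ n * ‖uMap P V i v‖ := A1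
      _ ≤ K * sig i ^ n * (c i * ‖t‖) :=
          mul_le_mul_of_nonneg_left A2 (mul_nonneg (le_of_lt hK0) hsign)
      _ = K * c i * (sig i ^ n * ‖t‖) := by ring
      _ ≤ K * c i * (lam ^ n * σm i ^ n * ‖t‖) :=
          mul_le_mul_of_nonneg_left (mul_le_mul_of_nonneg_right A3 (norm_nonneg _))
            (mul_nonneg (le_of_lt hK0) (hc0 i))
      _ = K * c i * lam ^ n * (σm i ^ n * ‖t‖) := by ring
      _ ≤ K * c i * lam ^ n * (K * ‖Phi A n 0 t‖) :=
          mul_le_mul_of_nonneg_left A4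
            (mul_nonneg (mul_nonneg (le_of_lt hK0) (hc0 i)) hlamn)
      _ ≤ K * c i * lam ^ n * (K * (2 * K * ‖Phi A n 0 Lv‖)) :=
          mul_le_mul_of_nonneg_left
            (mul_le_mul_of_nonneg_left hphit (le_of_lt hK0))
            (mul_nonneg (mul_nonneg (le_of_lt hK0) (hc0 i)) hlamn)
      _ = 2 * K ^ 3 * c i * lam ^ n * ‖Phi A n 0 Lv‖ := by ring
  -- sum up
  calc ‖Phi A n 0 v - Phi A n 0 Lv‖
      = ‖Phi A n 0 (v - Lv)‖ := by rw [map_sub]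
    _ = ‖∑ i ∈ Finset.Icc 1 ℓ, Phi A n 0 (P 0 (i+1) (uMap P V i v))‖ := by
        rw [hdiff, map_sum]
    _ ≤ ∑ i ∈ Finset.Icc 1 ℓ, ‖Phi A n 0 (P 0 (i+1) (uMap P V i v))‖ :=
        norm_sum_le _ _
    _ ≤ ∑ i ∈ Finset.Icc 1 ℓ, 2 * K ^ 3 * c i * lam ^ n * ‖Phi A n 0 Lv‖ :=
        Finset.sum_le_sum hterm
    _ = C * lam ^ n * ‖Phi A n 0 Lv‖ := by
        rw [hC, Finset.sum_mul, Finset.sum_mul]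
end KeyBound

section AngleDiff
variable {d : ℕ} {A : ℕ → (Euc d →L[ℝ] Euc d)} {P : ℕ → ℕ → (Euc d →L[ℝ] Euc d)}
  {V : Submodule ℝ (Euc d)} {ℓ : ℕ} {K : ℝ} {σm σp : ℕ → ℝ}

lemma map_ne_bot_of_ne_bot (hA : ∀ n, IsUnit (A n)) {X : Submodule ℝ (Euc d)}
    (hX : X ≠ ⊥) (n : ℕ) : X.map (Phi A n 0 : Euc d →ₗ[ℝ] Euc d) ≠ ⊥ := by
  obtain ⟨x, hx, hx0⟩ := Submodule.exists_mem_ne_zero_of_ne_bot hX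
  rw [Submodule.ne_bot_iff]
  exact ⟨Phi A n 0 x, Submodule.mem_map_of_mem hx, Phi_inj hA n hx0⟩

lemma angle_diff_tendsto
    (hA : ∀ n, IsUnit (A n)) (hℓ : 1 ≤ ℓ) (hK : 1 ≤ K)
    (hσ0 : ∀ i, 1 ≤ i → i ≤ ℓ → 0 < σm i)
    (hσ1 : ∀ i, 1 ≤ i → i ≤ ℓ → σm i ≤ σp i)
    (hσ2 : ∀ i, 1 ≤ i → i < ℓ → σp (i + 1) < σm i)
    (hproj : ∀ n i, 1 ≤ i → i ≤ ℓ + 1 → P n i ∘L P n i = P n i)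
    (hP1 : ∀ n, P n 1 = 1) (hPl : ∀ n, P n (ℓ + 1) = 0)
    (hcomm : ∀ n m i, 1 ≤ i → i ≤ ℓ + 1 → P n i ∘L Phi A n m = Phi A n m ∘L P m i)
    (hrange : ∀ n i, 1 ≤ i → i ≤ ℓ → LinearMap.range (P n (i + 1) : Euc d →ₗ[ℝ] Euc d) ≤ LinearMap.range (P n i : Euc d →ₗ[ℝ] Euc d))
    (hker : ∀ n i, 1 ≤ i → i ≤ ℓ → LinearMap.ker (P n i : Euc d →ₗ[ℝ] Euc d) ≤ LinearMap.ker (P n (i + 1) : Euc d →ₗ[ℝ] Euc d))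
    (hbndS : ∀ i, 1 ≤ i → i ≤ ℓ → ∀ n m : ℕ, m ≤ n →
      ‖Phi A n m ∘L P m (i + 1)‖ ≤ K * (if i = ℓ then (0 : ℝ) else σp (i + 1)) ^ (n - m))
    (hbndU : ∀ i, 1 ≤ i → i ≤ ℓ → ∀ n m : ℕ, m ≤ n →
      ‖Phi A m n ∘L (1 - P n (i + 1))‖ ≤ K * (σm i ^ (n - m))⁻¹)
    (hV : V ≠ ⊥) :
    Filter.Tendsto (fun j : ℕ =>
      subAngle (V.map (Phi A (j - 1) 0 : Euc d →ₗ[ℝ] Euc d)) (V.map (Phi A j 0 : Euc d →ₗ[ℝ] Euc d)) -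
      subAngle ((V.map (LMap P V ℓ : Euc d →ₗ[ℝ] Euc d)).map (Phi A (j - 1) 0 : Euc d →ₗ[ℝ] Euc d))
        ((V.map (LMap P V ℓ : Euc d →ₗ[ℝ] Euc d)).map (Phi A j 0 : Euc d →ₗ[ℝ] Euc d))) Filter.atTop (nhds 0) := by
  set T := V.map (LMap P V ℓ : Euc d →ₗ[ℝ] Euc d) with hT
  obtain ⟨C, lam, hC0, hl0, hl1, hkey⟩ :=
    key_bound (V := V) hA hℓ hK hσ0 hσ1 hσ2 hproj hP1 hPl hcomm hrange hker hbndS hbndU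
  have hT_ne : T ≠ ⊥ := by
    obtain ⟨v, hv, hv0⟩ := Submodule.exists_mem_ne_zero_of_ne_bot hV
    rw [Submodule.ne_bot_iff]
    refine ⟨LMap P V ℓ v, Submodule.mem_map_of_mem hv, fun h => hv0 ?_⟩
    exact LMap_inj hproj hP1 hPl hrange hker hv h
  -- closeness of unit spheres
  have hclose : ∀ δ : ℝ, 0 < δ → ∀ᶠ n in Filter.atTop,
      (∀ x ∈ V.map (Phi A n 0 : Euc d →ₗ[ℝ] Euc d), ‖x‖ = 1 →
        ∃ y ∈ T.map (Phi A n 0 : Euc d →ₗ[ℝ] Euc d), ‖y‖ = 1 ∧ ‖x - y‖ ≤ δ) ∧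
      (∀ y ∈ T.map (Phi A n 0 : Euc d →ₗ[ℝ] Euc d), ‖y‖ = 1 →
        ∃ x ∈ V.map (Phi A n 0 : Euc d →ₗ[ℝ] Euc d), ‖x‖ = 1 ∧ ‖y - x‖ ≤ δ) := by
    intro δ hδ
    have htend : Filter.Tendsto (fun n : ℕ => C * lam ^ n) Filter.atTop (nhds 0) := by
      have := (tendsto_pow_atTop_nhds_zero_of_lt_one hl0 hl1).const_mul C
      simpa using this
    have hsmall : ∀ᶠ n in Filter.atTop, C * lam ^ n < min (1/2) (δ/4) := by
      apply htend.eventually_lt_const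
      simp only [lt_min_iff]
      constructor <;> linarith
    filter_upwards [hsmall] with n hn
    have hn1 : C * lam ^ n ≤ 1/2 := le_of_lt (lt_of_lt_of_le hn (min_le_left _ _))
    have hn2 : C * lam ^ n ≤ δ/4 := le_of_lt (lt_of_lt_of_le hn (min_le_right _ _))
    have hCl0 : 0 ≤ C * lam ^ n := mul_nonneg hC0 (pow_nonneg hl0 n)
    constructor
    · rintro x ⟨v, hv, rfl⟩ hx1
      simp only [ContinuousLinearMap.coe_coe] at hx1 ⊢
      have hv0 : v ≠ 0 := by
        rintro rfl
        simp at hx1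
      have hLv0 : LMap P V ℓ v ≠ 0 := fun h =>
        hv0 (LMap_inj hproj hP1 hPl hrange hker hv h)
      set b := Phi A n 0 (LMap P V ℓ v) with hb
      have hb0 : b ≠ 0 := Phi_inj hA n hLv0
      have hbd : ‖Phi A n 0 v - b‖ ≤ C * lam ^ n * ‖b‖ := hkey n v hv
      have hbnorm : ‖b‖ ≤ 2 := by
        have h1 : ‖b‖ - ‖Phi A n 0 v‖ ≤ ‖Phi A n 0 v - b‖ := by
          rw [norm_sub_rev]
          exact norm_sub_norm_le _ _
        have h2 : C * lam ^ n * ‖b‖ ≤ (1/2) * ‖b‖ :=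
          mul_le_mul_of_nonneg_right hn1 (norm_nonneg _)
        rw [hx1] at h1
        linarith
      refine ⟨‖b‖⁻¹ • b, ?_, ?_, ?_⟩
      · exact Submodule.smul_mem _ _
          (Submodule.mem_map_of_mem (Submodule.mem_map_of_mem hv))
      · rw [norm_smul, norm_inv, norm_norm, inv_mul_cancel₀ (norm_ne_zero_iff.mpr hb0)]
      · have hx0 : Phi A n 0 v ≠ 0 := by
          intro h
          rw [h] at hx1
          simp at hx1
        have := norm_normalize_sub hx0 hb0
        rw [hx1] at this
        simp only [inv_one, one_smul, div_one] at this
        calc ‖Phi A n 0 v - ‖b‖⁻¹ • b‖ ≤ 2 * ‖Phi A n 0 v - b‖ := this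
          _ ≤ 2 * (C * lam ^ n * ‖b‖) := by linarith
          _ ≤ 2 * (δ/4 * 2) := by
              have : C * lam ^ n * ‖b‖ ≤ δ/4 * 2 :=
                mul_le_mul hn2 hbnorm (norm_nonneg _) (by linarith)
              linarith
          _ = δ := by ring
    · rintro y ⟨t, ht, rfl⟩ hy1
      obtain ⟨v, hv, rfl⟩ := ht
      simp only [ContinuousLinearMap.coe_coe] at hy1 ⊢
      have hv0 : v ≠ 0 := by
        rintro rfl
        simp at hy1
      have ha0 : Phi A n 0 v ≠ 0 := Phi_inj hA n hv0
      have hb0 : Phi A n 0 (LMap P V ℓ v) ≠ 0 := by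
        intro h
        rw [h] at hy1
        simp at hy1
      refine ⟨‖Phi A n 0 v‖⁻¹ • Phi A n 0 v,
        Submodule.smul_mem _ _ (Submodule.mem_map_of_mem hv), ?_, ?_⟩
      · rw [norm_smul, norm_inv, norm_norm, inv_mul_cancel₀ (norm_ne_zero_iff.mpr ha0)]
      · have := norm_normalize_sub hb0 ha0
        rw [hy1] at this
        simp only [inv_one, one_smul, div_one] at this
        have hbd : ‖Phi A n 0 v - Phi A n 0 (LMap P V ℓ v)‖ ≤ C * lam ^ n := by
          have := hkey n v hv
          rw [hy1] at this
          simpa using this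
        calc ‖Phi A n 0 (LMap P V ℓ v) - ‖Phi A n 0 v‖⁻¹ • Phi A n 0 v‖
            ≤ 2 * ‖Phi A n 0 (LMap P V ℓ v) - Phi A n 0 v‖ := this
          _ = 2 * ‖Phi A n 0 v - Phi A n 0 (LMap P V ℓ v)‖ := by rw [norm_sub_rev]
          _ ≤ 2 * (C * lam ^ n) := by linarith
          _ ≤ 2 * (δ/4) := by linarith
          _ ≤ δ := by linarith
  -- conclude convergence of angle differences
  rw [Metric.tendsto_atTop]
  intro ε hε
  obtain ⟨δA, hδA, hδA'⟩ := myArccosUC (ε/2) (by linarith)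
  have hδ2 : (0:ℝ) < δA / 2 := by linarith
  have hev1 := hclose (δA/2) hδ2
  have hev2 : ∀ᶠ j : ℕ in Filter.atTop,
      (∀ x ∈ V.map (Phi A (j-1) 0 : Euc d →ₗ[ℝ] Euc d), ‖x‖ = 1 →
        ∃ y ∈ T.map (Phi A (j-1) 0 : Euc d →ₗ[ℝ] Euc d), ‖y‖ = 1 ∧ ‖x - y‖ ≤ δA/2) ∧
      (∀ y ∈ T.map (Phi A (j-1) 0 : Euc d →ₗ[ℝ] Euc d), ‖y‖ = 1 →
        ∃ x ∈ V.map (Phi A (j-1) 0 : Euc d →ₗ[ℝ] Euc d), ‖x‖ = 1 ∧ ‖y - x‖ ≤ δA/2) := by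
    have hsub : Filter.Tendsto (fun j : ℕ => j - 1) Filter.atTop Filter.atTop :=
      Filter.tendsto_sub_atTop_nat 1
    exact hsub.eventually hev1
  obtain ⟨N1, hN1⟩ := Filter.eventually_atTop.mp hev1
  obtain ⟨N2, hN2⟩ := Filter.eventually_atTop.mp hev2
  refine ⟨max N1 N2, fun j hj => ?_⟩
  have hj1 : N1 ≤ j := le_trans (le_max_left _ _) hj
  have hj2 : N2 ≤ j := le_trans (le_max_right _ _) hj
  obtain ⟨hf1, hb1⟩ := hN2 j hj2
  obtain ⟨hf2, hb2⟩ := hN1 j hj1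
  -- the four subspaces
  have hV1 : V.map (Phi A (j-1) 0 : Euc d →ₗ[ℝ] Euc d) ≠ ⊥ := map_ne_bot_of_ne_bot hA hV _
  have hW1 : V.map (Phi A j 0 : Euc d →ₗ[ℝ] Euc d) ≠ ⊥ := map_ne_bot_of_ne_bot hA hV _
  have hV2 : T.map (Phi A (j-1) 0 : Euc d →ₗ[ℝ] Euc d) ≠ ⊥ := map_ne_bot_of_ne_bot hA hT_ne _
  have hW2 : T.map (Phi A j 0 : Euc d →ₗ[ℝ] Euc d) ≠ ⊥ := map_ne_bot_of_ne_bot hA hT_ne _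
  have hcdiff : |cVal (V.map (Phi A (j-1) 0 : Euc d →ₗ[ℝ] Euc d)) (V.map (Phi A j 0 : Euc d →ₗ[ℝ] Euc d)) -
      cVal (T.map (Phi A (j-1) 0 : Euc d →ₗ[ℝ] Euc d)) (T.map (Phi A j 0 : Euc d →ₗ[ℝ] Euc d))| ≤ 2 * (δA/2) :=
    abs_cVal_sub_le hV1 hW1 hV2 hW2 hb1 hf1 hf2 hb2
  have hc1 : |cVal (V.map (Phi A (j-1) 0 : Euc d →ₗ[ℝ] Euc d)) (V.map (Phi A j 0 : Euc d →ₗ[ℝ] Euc d))| ≤ 1 :=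
    abs_le.mpr ⟨by linarith [cVal_nonneg hV1 hW1], cVal_le_one hV1 hW1⟩
  have hc2 : |cVal (T.map (Phi A (j-1) 0 : Euc d →ₗ[ℝ] Euc d)) (T.map (Phi A j 0 : Euc d →ₗ[ℝ] Euc d))| ≤ 1 :=
    abs_le.mpr ⟨by linarith [cVal_nonneg hV2 hW2], cVal_le_one hV2 hW2⟩
  have := hδA' _ _ hc1 hc2 (by linarith)
  rw [Real.dist_eq, sub_zero, subAngle_eq_arccos_cVal, subAngle_eq_arccos_cVal]
  calc |Real.arccos (cVal (V.map (Phi A (j-1) 0 : Euc d →ₗ[ℝ] Euc d)) (V.map (Phi A j 0 : Euc d →ₗ[ℝ] Euc d))) -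
      Real.arccos (cVal (T.map (Phi A (j-1) 0 : Euc d →ₗ[ℝ] Euc d)) (T.map (Phi A j 0 : Euc d →ₗ[ℝ] Euc d)))| ≤ ε/2 := this
    _ < ε := by linarith
end AngleDiff

section Master
open Filter
variable {d : ℕ}

lemma angSum_div_mem (A : ℕ → (Euc d →L[ℝ] Euc d)) (X : Submodule ℝ (Euc d)) (n : ℕ) :
    angSum A X 1 n / n ∈ Set.Icc (0:ℝ) Real.pi := by
  rcases Nat.eq_zero_or_pos n with rfl | hn
  · simp [angSum, Real.pi_nonneg]
  · have hn' : (0:ℝ) < n := by exact_mod_cast hn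
    have h0 : 0 ≤ angSum A X 1 n :=
      Finset.sum_nonneg fun j _ => Real.arccos_nonneg _
    have h1 : angSum A X 1 n ≤ n * Real.pi := by
      calc angSum A X 1 n ≤ ∑ _j ∈ Finset.Icc 1 n, Real.pi :=
            Finset.sum_le_sum fun j _ => Real.arccos_le_pi _
        _ = n * Real.pi := by
            rw [Finset.sum_const, Nat.card_Icc]
            simp [nsmul_eq_mul]
    constructor
    · positivity
    · rw [div_le_iff₀ hn']
      linarith

lemma master {A : ℕ → (Euc d →L[ℝ] Euc d)} {P : ℕ → ℕ → (Euc d →L[ℝ] Euc d)}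
    {ℓ : ℕ} {K : ℝ} {σm σp : ℕ → ℝ}
    (hA : ∀ n, IsUnit (A n)) (hℓ : 1 ≤ ℓ) (hK : 1 ≤ K)
    (hσ0 : ∀ i, 1 ≤ i → i ≤ ℓ → 0 < σm i)
    (hσ1 : ∀ i, 1 ≤ i → i ≤ ℓ → σm i ≤ σp i)
    (hσ2 : ∀ i, 1 ≤ i → i < ℓ → σp (i + 1) < σm i)
    (hproj : ∀ n i, 1 ≤ i → i ≤ ℓ + 1 → P n i ∘L P n i = P n i)
    (hP1 : ∀ n, P n 1 = 1) (hPl : ∀ n, P n (ℓ + 1) = 0)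
    (hcomm : ∀ n m i, 1 ≤ i → i ≤ ℓ + 1 → P n i ∘L Phi A n m = Phi A n m ∘L P m i)
    (hrange : ∀ n i, 1 ≤ i → i ≤ ℓ → LinearMap.range (P n (i + 1) : Euc d →ₗ[ℝ] Euc d) ≤ LinearMap.range (P n i : Euc d →ₗ[ℝ] Euc d))
    (hker : ∀ n i, 1 ≤ i → i ≤ ℓ → LinearMap.ker (P n i : Euc d →ₗ[ℝ] Euc d) ≤ LinearMap.ker (P n (i + 1) : Euc d →ₗ[ℝ] Euc d))
    (hbndS : ∀ i, 1 ≤ i → i ≤ ℓ → ∀ n m : ℕ, m ≤ n →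
      ‖Phi A n m ∘L P m (i + 1)‖ ≤ K * (if i = ℓ then (0 : ℝ) else σp (i + 1)) ^ (n - m))
    (hbndU : ∀ i, 1 ≤ i → i ≤ ℓ → ∀ n m : ℕ, m ≤ n →
      ‖Phi A m n ∘L (1 - P n (i + 1))‖ ≤ K * (σm i ^ (n - m))⁻¹)
    (V : Submodule ℝ (Euc d)) (hV : V ≠ ⊥) :
    ∃ T : Submodule ℝ (Euc d), IsTraceAt P ℓ 0 T ∧
      Module.finrank ℝ T = Module.finrank ℝ V ∧
      limsup (fun n : ℕ => angSum A V 1 n / n) atTop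
        = limsup (fun n : ℕ => angSum A T 1 n / n) atTop ∧
      liminf (fun n : ℕ => angSum A V 1 n / n) atTop
        = liminf (fun n : ℕ => angSum A T 1 n / n) atTop := by
  set T := V.map (LMap P V ℓ : Euc d →ₗ[ℝ] Euc d) with hTdef
  have hdiff : Filter.Tendsto
      (fun n : ℕ => angSum A V 1 n / n - angSum A T 1 n / n) atTop (nhds 0) := by
    have heq : ∀ n : ℕ, angSum A V 1 n / n - angSum A T 1 n / n
        = (∑ j ∈ Finset.Icc 1 n, (subAngle (V.map (Phi A (j - 1) 0 : Euc d →ₗ[ℝ] Euc d)) (V.map (Phi A j 0 : Euc d →ₗ[ℝ] Euc d))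
            - subAngle (T.map (Phi A (j - 1) 0 : Euc d →ₗ[ℝ] Euc d)) (T.map (Phi A j 0 : Euc d →ₗ[ℝ] Euc d)))) / n := by
      intro n
      rw [Finset.sum_sub_distrib, sub_div]
      rfl
    have := myCesaro (angle_diff_tendsto hA hℓ hK hσ0 hσ1 hσ2 hproj hP1 hPl hcomm
      hrange hker hbndS hbndU hV)
    simp only [heq]
    exact this
  refine ⟨T, traceSpace_isTrace hproj hrange,
    traceSpace_finrank hproj hP1 hPl hrange hker, ?_, ?_⟩
  · exact myLimsupCongr hdiff (angSum_div_mem A V) (angSum_div_mem A T)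
  · exact myLiminfCongr hdiff (angSum_div_mem A V) (angSum_div_mem A T)
end Master


/-- Under the spectral hypotheses, the upper and lower `s`-th outer angular
values can be computed over trace spaces only:
`θ̂_s = sup_{V∈𝒢(s,d)} limsup (1/n) a_{1,n}(V) = sup_{V∈𝒟_0(s,d)} limsup (1/n) a_{1,n}(V)`,
and likewise with `liminf`. -/
theorem outer_angular_values_reduce_to_traceSpaces
    {d : ℕ} (A : ℕ → (Euc d →L[ℝ] Euc d)) (hA : ∀ n, IsUnit (A n))
    (hbd : ∃ Cb : ℝ, ∀ n, ‖A n‖ + ‖Ring.inverse (A n)‖ ≤ Cb)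
    (ℓ : ℕ) (hℓ : 1 ≤ ℓ) (K : ℝ) (hK : 1 ≤ K)
    (σm σp : ℕ → ℝ)
    (hσ0 : ∀ i, 1 ≤ i → i ≤ ℓ → 0 < σm i)
    (hσ1 : ∀ i, 1 ≤ i → i ≤ ℓ → σm i ≤ σp i)
    (hσ2 : ∀ i, 1 ≤ i → i < ℓ → σp (i + 1) < σm i)
    (P : ℕ → ℕ → (Euc d →L[ℝ] Euc d))
    (hproj : ∀ n i, 1 ≤ i → i ≤ ℓ + 1 → P n i ∘L P n i = P n i)
    (hP1 : ∀ n, P n 1 = 1)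
    (hPl : ∀ n, P n (ℓ + 1) = 0)
    (hcomm : ∀ n m i, 1 ≤ i → i ≤ ℓ + 1 → P n i ∘L Phi A n m = Phi A n m ∘L P m i)
    (hrange : ∀ n i, 1 ≤ i → i ≤ ℓ → LinearMap.range (P n (i + 1) : Euc d →ₗ[ℝ] Euc d) ≤ LinearMap.range (P n i : Euc d →ₗ[ℝ] Euc d))
    (hker : ∀ n i, 1 ≤ i → i ≤ ℓ → LinearMap.ker (P n i : Euc d →ₗ[ℝ] Euc d) ≤ LinearMap.ker (P n (i + 1) : Euc d →ₗ[ℝ] Euc d))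
    (hbndS : ∀ i, 1 ≤ i → i ≤ ℓ → ∀ n m : ℕ, m ≤ n →
      ‖Phi A n m ∘L P m (i + 1)‖ ≤ K * (if i = ℓ then (0 : ℝ) else σp (i + 1)) ^ (n - m))
    (hbndU : ∀ i, 1 ≤ i → i ≤ ℓ → ∀ n m : ℕ, m ≤ n →
      ‖Phi A m n ∘L (1 - P n (i + 1))‖ ≤ K * (σm i ^ (n - m))⁻¹)
    (s : ℕ) (hs1 : 1 ≤ s) (hsd : s ≤ d) :
    sSup {x : ℝ | ∃ V : Submodule ℝ (Euc d), Module.finrank ℝ V = s ∧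
        x = limsup (fun n : ℕ => angSum A V 1 n / n) atTop} =
      sSup {x : ℝ | ∃ V : Submodule ℝ (Euc d), IsTraceAt P ℓ 0 V ∧
        Module.finrank ℝ V = s ∧
        x = limsup (fun n : ℕ => angSum A V 1 n / n) atTop} ∧
    sSup {x : ℝ | ∃ V : Submodule ℝ (Euc d), Module.finrank ℝ V = s ∧
        x = liminf (fun n : ℕ => angSum A V 1 n / n) atTop} =
      sSup {x : ℝ | ∃ V : Submodule ℝ (Euc d), IsTraceAt P ℓ 0 V ∧
        Module.finrank ℝ V = s ∧
        x = liminf (fun n : ℕ => angSum A V 1 n / n) atTop} := by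
  have key : ∀ V : Submodule ℝ (Euc d), Module.finrank ℝ V = s →
      ∃ T : Submodule ℝ (Euc d), IsTraceAt P ℓ 0 T ∧ Module.finrank ℝ T = s ∧
        Filter.limsup (fun n : ℕ => angSum A V 1 n / n) Filter.atTop
          = Filter.limsup (fun n : ℕ => angSum A T 1 n / n) Filter.atTop ∧
        Filter.liminf (fun n : ℕ => angSum A V 1 n / n) Filter.atTop
          = Filter.liminf (fun n : ℕ => angSum A T 1 n / n) Filter.atTop := by
    intro V hfin
    have hVne : V ≠ ⊥ := by
      intro h
      rw [h, finrank_bot] at hfin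
      omega
    obtain ⟨T, htr, hfT, hls, hli⟩ := master hA hℓ hK hσ0 hσ1 hσ2 hproj hP1 hPl hcomm
      hrange hker hbndS hbndU V hVne
    exact ⟨T, htr, by rw [hfT, hfin], hls, hli⟩
  constructor
  · congr 1
    apply Set.eq_of_subset_of_subset
    · rintro x ⟨V, hfin, rfl⟩
      obtain ⟨T, htr, hfT, hls, _⟩ := key V hfin
      exact ⟨T, htr, hfT, hls⟩
    · rintro x ⟨T, _, hfin, rfl⟩
      exact ⟨T, hfin, rfl⟩
  · congr 1
    apply Set.eq_of_subset_of_subset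
    · rintro x ⟨V, hfin, rfl⟩
      obtain ⟨T, htr, hfT, _, hli⟩ := key V hfin
      exact ⟨T, htr, hfT, hli⟩
    · rintro x ⟨T, _, hfin, rfl⟩
      exact ⟨T, hfin, rfl⟩
end
end

section
/- Under the spectral hypotheses, define for a subspace V ⊆ ℝ^d the quantity θ̄_1(V) := limsup_{n→∞} sup_{v∈V, v≠0} (1/n) a_{1,n}(v), where a_{m,n}(v) := Σ_{j=m}^{n} ∠(Φ(j−1,0)v, Φ(j,0)v) (angles between lines). Assume that for each i = 1,…,ℓ the inner and uniform inner angular values agree within the fiber 𝒲_0^i, i.e. θ̄_1(𝒲_0^i) = lim_{n→∞} (1/n) sup_{v∈𝒲_0^i, v≠0} sup_{k∈ℕ} a_{k+1,k+n}(v). Then the first inner angular value satisfies θ̄_1(ℝ^d) = max_{i=1,…,ℓ} θ̄_1(𝒲_0^i). -/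
open Filter

noncomputable section

/-- `a_{m,n}(v) = Σ_{j=m}^n ∠(Φ(j-1,0)v, Φ(j,0)v)` (angles between lines); `0` for `m > n`. -/
noncomputable def aVec {d : ℕ} (A : ℕ → (Euc d →L[ℝ] Euc d)) (v : Euc d) (m n : ℕ) : ℝ :=
  ∑ j ∈ Finset.Icc m n, vecAngle (Phi A (j - 1) 0 v) (Phi A j 0 v)

/-- The first inner angular value of a subspace:
`θ̄₁(V) = limsup_n sup_{v∈V, v≠0} (1/n) a_{1,n}(v)`. -/
noncomputable def thetaBar1 {d : ℕ} (A : ℕ → (Euc d →L[ℝ] Euc d))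
    (V : Submodule ℝ (Euc d)) : ℝ :=
  limsup (fun n : ℕ => sSup {x : ℝ | ∃ v ∈ V, v ≠ 0 ∧ x = aVec A v 1 n / n}) atTop


/-! ### Auxiliary lemmas -/

section Aux

lemma arccos_anti : Antitone Real.arccos := by
  intro a b hab
  unfold Real.arccos
  exact sub_le_sub_left (Real.monotone_arcsin hab) _

lemma vecAngle_nonneg {d : ℕ} (v w : Euc d) : 0 ≤ vecAngle v w := Real.arccos_nonneg _

lemma vecAngle_le_pi_div_two {d : ℕ} (v w : Euc d) : vecAngle v w ≤ Real.pi / 2 :=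
  Real.arccos_le_pi_div_two.2 (div_nonneg (abs_nonneg _) (by positivity))

lemma vecAngle_comm' {d : ℕ} (v w : Euc d) : vecAngle v w = vecAngle w v := by
  unfold vecAngle
  rw [real_inner_comm, mul_comm]

lemma vecAngle_smul_left' {d : ℕ} {c : ℝ} (hc : c ≠ 0) {v w : Euc d} :
    vecAngle (c • v) w = vecAngle v w := by
  unfold vecAngle
  rw [real_inner_smul_left, abs_mul, norm_smul, Real.norm_eq_abs]
  congr 1
  rw [mul_assoc, mul_div_mul_left _ _ (abs_ne_zero.2 hc)]

lemma vecAngle_smul_right' {d : ℕ} {c : ℝ} (hc : c ≠ 0) {v w : Euc d} :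
    vecAngle v (c • w) = vecAngle v w := by
  rw [vecAngle_comm', vecAngle_smul_left' hc, vecAngle_comm']

lemma inner_triangle_est {d : ℕ} (x y z : Euc d) (hx : ‖x‖ = 1) (hy : ‖y‖ = 1) (hz : ‖z‖ = 1) :
    |(inner ℝ x y : ℝ)| * |(inner ℝ y z : ℝ)| -
      Real.sqrt (1 - |(inner ℝ x y : ℝ)| ^ 2) * Real.sqrt (1 - |(inner ℝ y z : ℝ)| ^ 2) ≤
      |(inner ℝ x z : ℝ)| := by
  set p : ℝ := inner ℝ x y
  set q : ℝ := inner ℝ y z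
  set a : Euc d := x - p • y with ha
  set c : Euc d := z - q • y with hc
  have hyy : (inner ℝ y y : ℝ) = 1 := by
    rw [real_inner_self_eq_norm_sq, hy]; norm_num
  have hac : (inner ℝ a c : ℝ) = (inner ℝ x z : ℝ) - p * q := by
    simp only [ha, hc, inner_sub_left, inner_sub_right, real_inner_smul_left,
      real_inner_smul_right, hyy]
    ring
  have hna : ‖a‖ ^ 2 = 1 - p ^ 2 := by
    have := real_inner_self_eq_norm_sq a
    rw [ha] at this
    simp only [inner_sub_left, inner_sub_right, real_inner_smul_left,
      real_inner_smul_right, hyy] at this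
    have e1 : (inner ℝ x x : ℝ) = 1 := by rw [real_inner_self_eq_norm_sq, hx]; norm_num
    have e2 : (inner ℝ y x : ℝ) = p := (real_inner_comm y x).symm
    rw [e1, e2] at this
    rw [ha, ← this]; ring
  have hnc : ‖c‖ ^ 2 = 1 - q ^ 2 := by
    have := real_inner_self_eq_norm_sq c
    rw [hc] at this
    simp only [inner_sub_left, inner_sub_right, real_inner_smul_left,
      real_inner_smul_right, hyy] at this
    have e3 : (inner ℝ z z : ℝ) = 1 := by rw [real_inner_self_eq_norm_sq, hz]; norm_num
    have e4 : (inner ℝ z y : ℝ) = q := (real_inner_comm z y).symm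
    rw [e3, e4] at this
    rw [hc, ← this]; ring
  have hCS : |(inner ℝ a c : ℝ)| ≤ ‖a‖ * ‖c‖ := abs_real_inner_le_norm a c
  have hsa : ‖a‖ = Real.sqrt (1 - |p| ^ 2) := by
    rw [sq_abs, ← hna, Real.sqrt_sq (norm_nonneg a)]
  have hsc : ‖c‖ = Real.sqrt (1 - |q| ^ 2) := by
    rw [sq_abs, ← hnc, Real.sqrt_sq (norm_nonneg c)]
  have hxz : (inner ℝ x z : ℝ) = p * q + (inner ℝ a c : ℝ) := by rw [hac]; ring
  have h1 : |p| * |q| - ‖a‖ * ‖c‖ ≤ |p * q| - |(inner ℝ a c : ℝ)| := by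
    rw [abs_mul]; linarith
  calc |p| * |q| - Real.sqrt (1 - |p| ^ 2) * Real.sqrt (1 - |q| ^ 2)
      = |p| * |q| - ‖a‖ * ‖c‖ := by rw [hsa, hsc]
    _ ≤ |p * q| - |(inner ℝ a c : ℝ)| := h1
    _ ≤ |p * q + (inner ℝ a c : ℝ)| := by
        have := abs_add_le (p * q + (inner ℝ a c : ℝ)) (-(inner ℝ a c : ℝ))
        simp only [add_neg_cancel_right, abs_neg] at this
        linarith
    _ = |(inner ℝ x z : ℝ)| := by rw [hxz]

lemma vecAngle_triangle_unit {d : ℕ} (x y z : Euc d) (hx : ‖x‖ = 1) (hy : ‖y‖ = 1)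
    (hz : ‖z‖ = 1) : vecAngle x z ≤ vecAngle x y + vecAngle y z := by
  set p : ℝ := |(inner ℝ x y : ℝ)| with hp
  set q : ℝ := |(inner ℝ y z : ℝ)| with hq
  have hp0 : 0 ≤ p := abs_nonneg _
  have hq0 : 0 ≤ q := abs_nonneg _
  have hp1 : p ≤ 1 := by
    have := abs_real_inner_le_norm x y; rw [hx, hy] at this; simpa using this
  have hq1 : q ≤ 1 := by
    have := abs_real_inner_le_norm y z; rw [hy, hz] at this; simpa using this
  have hxy : vecAngle x y = Real.arccos p := by unfold vecAngle; rw [hx, hy, one_mul, div_one]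
  have hyz : vecAngle y z = Real.arccos q := by unfold vecAngle; rw [hy, hz, one_mul, div_one]
  have hxz : vecAngle x z = Real.arccos |(inner ℝ x z : ℝ)| := by
    unfold vecAngle; rw [hx, hz, one_mul, div_one]
  rw [hxy, hyz, hxz]
  set A := Real.arccos p
  set B := Real.arccos q
  have hA0 : 0 ≤ A := Real.arccos_nonneg _
  have hB0 : 0 ≤ B := Real.arccos_nonneg _
  have hApi : A ≤ Real.pi / 2 := Real.arccos_le_pi_div_two.2 hp0
  have hBpi : B ≤ Real.pi / 2 := Real.arccos_le_pi_div_two.2 hq0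
  have hcos : Real.cos (A + B) ≤ |(inner ℝ x z : ℝ)| := by
    rw [Real.cos_add]
    have hcA : Real.cos A = p := Real.cos_arccos (by linarith) hp1
    have hcB : Real.cos B = q := Real.cos_arccos (by linarith) hq1
    have hsA : Real.sin A = Real.sqrt (1 - p ^ 2) := Real.sin_arccos p
    have hsB : Real.sin B = Real.sqrt (1 - q ^ 2) := Real.sin_arccos q
    rw [hcA, hcB, hsA, hsB]
    exact inner_triangle_est x y z hx hy hz
  calc Real.arccos |(inner ℝ x z : ℝ)| ≤ Real.arccos (Real.cos (A + B)) := arccos_anti hcos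
    _ = A + B := Real.arccos_cos (by linarith) (by linarith)

lemma vecAngle_triangle {d : ℕ} {x y z : Euc d} (hx : x ≠ 0) (hy : y ≠ 0) (hz : z ≠ 0) :
    vecAngle x z ≤ vecAngle x y + vecAngle y z := by
  have e : ∀ v w : Euc d, v ≠ 0 → w ≠ 0 →
      vecAngle v w = vecAngle (‖v‖⁻¹ • v) (‖w‖⁻¹ • w) := by
    intro v w hv hw
    rw [vecAngle_smul_left' (inv_ne_zero (norm_ne_zero_iff.2 hv)),
      vecAngle_smul_right' (inv_ne_zero (norm_ne_zero_iff.2 hw))]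
  rw [e x z hx hz, e x y hx hy, e y z hy hz]
  exact vecAngle_triangle_unit _ _ _ (norm_smul_inv_norm hx) (norm_smul_inv_norm hy)
    (norm_smul_inv_norm hz)

lemma vecAngle_perturb {d : ℕ} {w e : Euc d} {δ : ℝ} (hw : w ≠ 0) (hδ1 : δ < 1)
    (he : ‖e‖ ≤ δ * ‖w‖) : vecAngle (w + e) w ≤ Real.arccos ((1 - δ) / (1 + δ)) := by
  have hwpos : 0 < ‖w‖ := norm_pos_iff.2 hw
  have hδ0 : 0 ≤ δ := by nlinarith [norm_nonneg e]
  have hip : (inner ℝ (w + e) w : ℝ) = ‖w‖ ^ 2 + (inner ℝ e w : ℝ) := by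
    rw [inner_add_left, real_inner_self_eq_norm_sq]
  have hiew : |(inner ℝ e w : ℝ)| ≤ δ * ‖w‖ ^ 2 := by
    calc |(inner ℝ e w : ℝ)| ≤ ‖e‖ * ‖w‖ := abs_real_inner_le_norm e w
      _ ≤ δ * ‖w‖ * ‖w‖ := by nlinarith
      _ = δ * ‖w‖ ^ 2 := by ring
  have hlow : (1 - δ) * ‖w‖ ^ 2 ≤ |(inner ℝ (w + e) w : ℝ)| := by
    have h1 : (1 - δ) * ‖w‖ ^ 2 ≤ (inner ℝ (w + e) w : ℝ) := by
      rw [hip]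
      have := abs_le.1 hiew
      nlinarith
    exact h1.trans (le_abs_self _)
  have hup : ‖w + e‖ ≤ (1 + δ) * ‖w‖ := by
    calc ‖w + e‖ ≤ ‖w‖ + ‖e‖ := norm_add_le w e
      _ ≤ (1 + δ) * ‖w‖ := by nlinarith
  have hYpos : 0 < ‖w + e‖ * ‖w‖ := by
    have h2 : ‖w‖ - ‖w + e‖ ≤ ‖e‖ := by
      have := norm_sub_norm_le w (w + e)
      rwa [show w - (w + e) = -e by abel, norm_neg] at this
    have h1 : (1 - δ) * ‖w‖ ≤ ‖w + e‖ := by nlinarith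
    have h3 : (0 : ℝ) < (1 - δ) * ‖w‖ := mul_pos (by linarith) hwpos
    exact mul_pos (lt_of_lt_of_le h3 h1) hwpos
  have key : (1 - δ) / (1 + δ) ≤ |(inner ℝ (w + e) w : ℝ)| / (‖w + e‖ * ‖w‖) := by
    rw [div_le_div_iff₀ (by linarith) hYpos]
    nlinarith [abs_nonneg (inner ℝ (w + e) w : ℝ), norm_nonneg (w + e)]
  exact arccos_anti key

section PhiAlg

variable {d : ℕ} {A : ℕ → (Euc d →L[ℝ] Euc d)}

lemma PhiF_add (m a b : ℕ) : PhiF A m (a + b) = PhiF A (m + a) b ∘L PhiF A m a := by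
  induction b with
  | zero => simp [PhiF, ContinuousLinearMap.one_def]
  | succ b ih =>
      show PhiF A m ((a + b) + 1) = _
      rw [PhiF, ih, PhiF, Nat.add_assoc, ContinuousLinearMap.comp_assoc]

lemma PhiF_isUnit (hA : ∀ n, IsUnit (A n)) (m n : ℕ) : IsUnit (PhiF A m n) := by
  induction n with
  | zero => exact isUnit_one
  | succ n ih =>
      rw [PhiF, ← ContinuousLinearMap.mul_def]
      exact (hA _).mul ih

lemma Phi_le {m n : ℕ} (h : m ≤ n) : Phi A n m = PhiF A m (n - m) := if_pos h

lemma Phi_self (n : ℕ) : Phi A n n = 1 := by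
  rw [Phi_le le_rfl, Nat.sub_self]; rfl

lemma Phi_cocycle {m n : ℕ} (h : m ≤ n) : Phi A n m ∘L Phi A m 0 = Phi A n 0 := by
  rw [Phi_le h, Phi_le (Nat.zero_le m), Phi_le (Nat.zero_le n), Nat.sub_zero, Nat.sub_zero]
  have := PhiF_add (A := A) 0 m (n - m)
  rw [Nat.zero_add, Nat.add_sub_cancel' h] at this
  exact this.symm

lemma Phi_inv (hA : ∀ n, IsUnit (A n)) {m n : ℕ} (h : m ≤ n) :
    Phi A m n ∘L Phi A n m = 1 := by
  rcases eq_or_lt_of_le h with rfl | hlt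
  · rw [Phi_self]; rfl
  · have h1 : Phi A m n = Ring.inverse (PhiF A m (n - m)) := by
      rw [Phi, if_neg (Nat.not_le.2 hlt)]
    rw [h1, Phi_le h, ← ContinuousLinearMap.mul_def]
    exact Ring.inverse_mul_cancel _ (PhiF_isUnit hA m (n - m))

lemma Phi_back_cocycle (hA : ∀ n, IsUnit (A n)) {m n : ℕ} (h : m ≤ n) :
    Phi A m n ∘L Phi A n 0 = Phi A m 0 := by
  rw [← Phi_cocycle h, ← ContinuousLinearMap.comp_assoc, Phi_inv hA h,
    ContinuousLinearMap.one_def, ContinuousLinearMap.id_comp]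

lemma Phi_ne_zero (hA : ∀ n, IsUnit (A n)) (n : ℕ) {v : Euc d} (hv : v ≠ 0) :
    Phi A n 0 v ≠ 0 := by
  intro h
  apply hv
  have h2 : (Phi A 0 n ∘L Phi A n 0) v = v := by
    rw [Phi_inv hA (Nat.zero_le n)]; rfl
  rw [← h2, ContinuousLinearMap.comp_apply, h, map_zero]

end PhiAlg

section AVec

variable {d : ℕ} {A : ℕ → (Euc d →L[ℝ] Euc d)}

lemma aVec_nonneg (v : Euc d) (m n : ℕ) : 0 ≤ aVec A v m n :=
  Finset.sum_nonneg fun _ _ => vecAngle_nonneg _ _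

lemma aVec_window_le (v : Euc d) (k n : ℕ) :
    aVec A v (k + 1) (k + n) ≤ n * (Real.pi / 2) := by
  have h := Finset.sum_le_card_nsmul (Finset.Icc (k + 1) (k + n))
    (fun j => vecAngle (Phi A (j - 1) 0 v) (Phi A j 0 v)) (Real.pi / 2)
    (fun j _ => vecAngle_le_pi_div_two _ _)
  rw [Nat.card_Icc] at h
  have e : k + n + 1 - (k + 1) = n := by omega
  rw [e, nsmul_eq_mul] at h
  exact h

lemma aVec_split (v : Euc d) {k b c : ℕ} (h1 : k ≤ b) (h2 : b ≤ c) :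
    aVec A v (k + 1) c = aVec A v (k + 1) b + aVec A v (b + 1) c := by
  unfold aVec
  rw [Finset.Icc_add_one_left_eq_Ioc, Finset.Icc_add_one_left_eq_Ioc, Finset.Icc_add_one_left_eq_Ioc]
  exact (Finset.sum_Ioc_consecutive _ h1 h2).symm

end AVec


section SupLim

variable {d : ℕ} {A : ℕ → (Euc d →L[ℝ] Euc d)}

lemma mem_S_bounds {V : Submodule ℝ (Euc d)} {n : ℕ} {x : ℝ}
    (hx : x ∈ {x : ℝ | ∃ v ∈ V, v ≠ 0 ∧ x = aVec A v 1 n / n}) :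
    0 ≤ x ∧ x ≤ Real.pi / 2 := by
  obtain ⟨v, hv, hv0, rfl⟩ := hx
  refine ⟨div_nonneg (aVec_nonneg v 1 n) (Nat.cast_nonneg n), ?_⟩
  rcases Nat.eq_zero_or_pos n with rfl | hn
  · have : aVec A v 1 0 = 0 := by
      unfold aVec
      rw [Finset.Icc_eq_empty (by omega), Finset.sum_empty]
    rw [this]
    simp
    positivity
  · have h1 : aVec A v 1 n ≤ n * (Real.pi / 2) := by
      have := aVec_window_le (A := A) v 0 n
      simpa using this
    rw [div_le_iff₀ (by exact_mod_cast hn)]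
    linarith [h1]

lemma sSup_S_nonneg (V : Submodule ℝ (Euc d)) (n : ℕ) :
    0 ≤ sSup {x : ℝ | ∃ v ∈ V, v ≠ 0 ∧ x = aVec A v 1 n / n} :=
  Real.sSup_nonneg fun _ hx => (mem_S_bounds hx).1

lemma sSup_S_le (V : Submodule ℝ (Euc d)) (n : ℕ) :
    sSup {x : ℝ | ∃ v ∈ V, v ≠ 0 ∧ x = aVec A v 1 n / n} ≤ Real.pi / 2 :=
  Real.sSup_le (fun _ hx => (mem_S_bounds hx).2) (by positivity)

lemma limsup_nonneg_of (g : ℕ → ℝ) (h0 : ∀ n, 0 ≤ g n) (h1 : ∀ n, g n ≤ Real.pi / 2) :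
    0 ≤ limsup g atTop :=
  Filter.le_limsup_of_frequently_le
    (Filter.Eventually.frequently (Filter.Eventually.of_forall h0))
    (Filter.isBoundedUnder_of ⟨Real.pi / 2, h1⟩)

lemma thetaBar1_nonneg (V : Submodule ℝ (Euc d)) : 0 ≤ thetaBar1 A V := by
  unfold thetaBar1
  exact limsup_nonneg_of _ (sSup_S_nonneg V) (sSup_S_le V)

lemma limsup_le_limsup_of (g h : ℕ → ℝ) (hgh : ∀ n, g n ≤ h n) (hg0 : ∀ n, 0 ≤ g n)
    (hh : ∀ n, h n ≤ Real.pi / 2) : limsup g atTop ≤ limsup h atTop := by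
  refine Filter.limsup_le_limsup (Filter.Eventually.of_forall hgh) ?_ ?_
  · exact (Filter.isBoundedUnder_of ⟨0, hg0⟩).isCoboundedUnder_le
  · exact Filter.isBoundedUnder_of ⟨Real.pi / 2, hh⟩

lemma limsup_le_of_le_tendsto (g f : ℕ → ℝ) {L : ℝ} (hg : ∀ n, 1 ≤ n → g n ≤ f n)
    (hg0 : ∀ n, 0 ≤ g n) (hf : Tendsto f atTop (nhds L)) : limsup g atTop ≤ L := by
  have h1 : limsup g atTop ≤ limsup f atTop := by
    refine Filter.limsup_le_limsup ?_ ?_ ?_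
    · filter_upwards [Filter.eventually_ge_atTop 1] with n hn using hg n hn
    · exact (Filter.isBoundedUnder_of ⟨0, hg0⟩).isCoboundedUnder_le
    · exact hf.isBoundedUnder_le
  rwa [hf.limsup_eq] at h1

lemma thetaBar1_le_pi_div_two (V : Submodule ℝ (Euc d)) : thetaBar1 A V ≤ Real.pi / 2 := by
  unfold thetaBar1
  exact limsup_le_of_le_tendsto _ (fun _ => Real.pi / 2) (fun n _ => sSup_S_le V n)
    (sSup_S_nonneg V) tendsto_const_nhds

lemma thetaBar1_le_top (V : Submodule ℝ (Euc d)) :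
    thetaBar1 A V ≤ thetaBar1 A (⊤ : Submodule ℝ (Euc d)) := by
  unfold thetaBar1
  apply limsup_le_limsup_of _ _ _ (sSup_S_nonneg V) (sSup_S_le ⊤)
  intro n
  apply Real.sSup_le _ (sSup_S_nonneg ⊤ n)
  intro x hx
  obtain ⟨v, hv, hv0, rfl⟩ := hx
  apply le_csSup ⟨Real.pi / 2, fun y hy => (mem_S_bounds hy).2⟩
  exact ⟨v, Submodule.mem_top, hv0, rfl⟩

/-- Uniform window bound from the uniform-convergence hypothesis. -/
lemma windowBound {W : Submodule ℝ (Euc d)} {t M ε : ℝ} (hε : 0 < ε) (htM : t ≤ M)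
    (hM0 : 0 ≤ M)
    (hu : Tendsto (fun n : ℕ =>
        (sSup {x : ℝ | ∃ v ∈ W, v ≠ 0 ∧ ∃ k : ℕ, x = aVec A v (k + 1) (k + n)}) / n) atTop
      (nhds t)) :
    ∃ C, 0 ≤ C ∧ ∀ k n : ℕ, ∀ v ∈ W, v ≠ 0 → aVec A v (k + 1) (k + n) ≤ n * (M + ε) + C := by
  set U : ℕ → Set ℝ :=
    fun n => {x : ℝ | ∃ v ∈ W, v ≠ 0 ∧ ∃ k : ℕ, x = aVec A v (k + 1) (k + n)} with hU
  have hbdd : ∀ n, ∀ x ∈ U n, x ≤ n * (Real.pi / 2) := by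
    intro n x hx
    obtain ⟨v, hv, hv0, k, rfl⟩ := hx
    exact aVec_window_le v k n
  obtain ⟨N, hN⟩ : ∃ N : ℕ, 1 ≤ N ∧ sSup (U N) / N < t + ε := by
    have h1 : ∀ᶠ n : ℕ in atTop, sSup (U n) / n < t + ε :=
      (hu.eventually_lt_const (by linarith)).mono fun n h => h
    have h2 : ∀ᶠ n : ℕ in atTop, 1 ≤ n := Filter.eventually_ge_atTop 1
    obtain ⟨N, hN1, hN2⟩ := (h2.and h1).exists
    exact ⟨N, hN1, hN2⟩
  obtain ⟨hN1, hN2⟩ := hN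
  have hNpos : (0 : ℝ) < N := by exact_mod_cast hN1
  have block : ∀ k : ℕ, ∀ v ∈ W, v ≠ 0 → aVec A v (k + 1) (k + N) ≤ N * (M + ε) := by
    intro k v hv hv0
    have hmem : aVec A v (k + 1) (k + N) ∈ U N := ⟨v, hv, hv0, k, rfl⟩
    have h3 : aVec A v (k + 1) (k + N) ≤ sSup (U N) :=
      le_csSup ⟨N * (Real.pi / 2), fun x hx => hbdd N x hx⟩ hmem
    have h4 : sSup (U N) ≤ N * (t + ε) := by
      rw [div_lt_iff₀ hNpos] at hN2
      linarith [hN2]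
    calc aVec A v (k + 1) (k + N) ≤ N * (t + ε) := h3.trans h4
      _ ≤ N * (M + ε) := by
          apply mul_le_mul_of_nonneg_left (by linarith) (le_of_lt hNpos)
  have chunk : ∀ q k s : ℕ, s ≤ N → ∀ v ∈ W, v ≠ 0 →
      aVec A v (k + 1) (k + (q * N + s)) ≤ q * (N * (M + ε)) + s * (Real.pi / 2) := by
    intro q
    induction q with
    | zero =>
        intro k s hs v hv hv0
        have := aVec_window_le (A := A) v k s
        simp only [Nat.zero_mul, Nat.zero_add, Nat.cast_zero, zero_mul, zero_add]
        exact this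
    | succ q ih =>
        intro k s hs v hv hv0
        have hsplit : aVec A v (k + 1) (k + ((q + 1) * N + s)) =
            aVec A v (k + 1) (k + N) + aVec A v ((k + N) + 1) ((k + N) + (q * N + s)) := by
          have e : k + ((q + 1) * N + s) = (k + N) + (q * N + s) := by ring
          rw [e]
          exact aVec_split v (by omega) (by omega)
        rw [hsplit]
        have h5 := block k v hv hv0
        have h6 := ih (k + N) s hs v hv hv0
        push_cast
        push_cast at h6
        linarith
  refine ⟨N * (Real.pi / 2), by positivity, ?_⟩
  intro k n v hv hv0
  have hdm : n = (n / N) * N + n % N := by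
    rw [Nat.mul_comm]
    exact (Nat.div_add_mod n N).symm
  have h7 := chunk (n / N) k (n % N) (le_of_lt (Nat.mod_lt n (by omega))) v hv hv0
  rw [← hdm] at h7
  have h8 : ((n / N : ℕ) : ℝ) * (N : ℝ) ≤ (n : ℝ) := by
    exact_mod_cast Nat.cast_le.2 (Nat.div_mul_le_self n N)
  have h9 : ((n % N : ℕ) : ℝ) ≤ (N : ℝ) := by
    exact_mod_cast Nat.cast_le.2 (le_of_lt (Nat.mod_lt n (by omega)))
  calc aVec A v (k + 1) (k + n) ≤ (n / N : ℕ) * (N * (M + ε)) + (n % N : ℕ) * (Real.pi / 2) :=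
        h7
    _ ≤ n * (M + ε) + N * (Real.pi / 2) := by
        have hMε : (0 : ℝ) ≤ M + ε := by linarith
        have h11 := mul_le_mul_of_nonneg_right h8 hMε
        have h10 := mul_le_mul_of_nonneg_right h9 (by positivity : (0:ℝ) ≤ Real.pi / 2)
        have e : ((n / N : ℕ) : ℝ) * ((N : ℝ) * (M + ε)) =
            ((n / N : ℕ) : ℝ) * (N : ℝ) * (M + ε) := by ring
        linarith [h11, h10, e.le, e.ge]

end SupLim

section Growth

variable {d : ℕ} {A : ℕ → (Euc d →L[ℝ] Euc d)} {P : ℕ → ℕ → (Euc d →L[ℝ] Euc d)}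

lemma proj_comm_apply {i : ℕ} (hcomm1 : ∀ n m : ℕ, P n i ∘L Phi A n m = Phi A n m ∘L P m i)
    (n m : ℕ) (x : Euc d) : P n i (Phi A n m x) = Phi A n m (P m i x) := by
  have := DFunLike.congr_fun (hcomm1 n m) x
  simpa using this

lemma rest_growth (hA : ∀ n, IsUnit (A n)) {i : ℕ}
    (hcomm1 : ∀ n m : ℕ, P n (i + 1) ∘L Phi A n m = Phi A n m ∘L P m (i + 1))
    {K σ : ℝ} (hb : ∀ n m : ℕ, m ≤ n → ‖Phi A n m ∘L P m (i + 1)‖ ≤ K * σ ^ (n - m))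
    {x : Euc d} (hx : P 0 (i + 1) x = x) {m n : ℕ} (h : m ≤ n) :
    ‖Phi A n 0 x‖ ≤ K * σ ^ (n - m) * ‖Phi A m 0 x‖ := by
  have e1 : Phi A n 0 x = (Phi A n m ∘L P m (i + 1)) (Phi A m 0 x) := by
    rw [ContinuousLinearMap.comp_apply, proj_comm_apply hcomm1 m 0, hx,
      ← ContinuousLinearMap.comp_apply, Phi_cocycle h]
  rw [e1]
  calc ‖(Phi A n m ∘L P m (i + 1)) (Phi A m 0 x)‖ ≤
      ‖Phi A n m ∘L P m (i + 1)‖ * ‖Phi A m 0 x‖ := ContinuousLinearMap.le_opNorm _ _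
    _ ≤ K * σ ^ (n - m) * ‖Phi A m 0 x‖ :=
        mul_le_mul_of_nonneg_right (hb n m h) (norm_nonneg _)

lemma fiber_growth (hA : ∀ n, IsUnit (A n)) {i : ℕ}
    (hcomm1 : ∀ n m : ℕ, P n (i + 1) ∘L Phi A n m = Phi A n m ∘L P m (i + 1))
    {K σ : ℝ} (hb : ∀ n m : ℕ, m ≤ n → ‖Phi A m n ∘L (1 - P n (i + 1))‖ ≤ K * (σ ^ (n - m))⁻¹)
    {x : Euc d} (hx : P 0 (i + 1) x = 0) {m n : ℕ} (h : m ≤ n) :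
    ‖Phi A m 0 x‖ ≤ K * (σ ^ (n - m))⁻¹ * ‖Phi A n 0 x‖ := by
  have e1 : Phi A m 0 x = (Phi A m n ∘L (1 - P n (i + 1))) (Phi A n 0 x) := by
    have e2 : (1 - P n (i + 1)) (Phi A n 0 x) = Phi A n 0 x := by
      have e3 : P n (i + 1) (Phi A n 0 x) = 0 := by
        rw [proj_comm_apply hcomm1 n 0, hx, map_zero]
      simp [ContinuousLinearMap.sub_apply, e3]
    rw [ContinuousLinearMap.comp_apply, e2, ← ContinuousLinearMap.comp_apply,
      Phi_back_cocycle hA h]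
  rw [e1]
  calc ‖(Phi A m n ∘L (1 - P n (i + 1))) (Phi A n 0 x)‖ ≤
      ‖Phi A m n ∘L (1 - P n (i + 1))‖ * ‖Phi A n 0 x‖ := ContinuousLinearMap.le_opNorm _ _
    _ ≤ K * (σ ^ (n - m))⁻¹ * ‖Phi A n 0 x‖ :=
        mul_le_mul_of_nonneg_right (hb n m h) (norm_nonneg _)

end Growth


end Aux

set_option maxHeartbeats 2000000 in
/-- The core downward induction: vectors in `range (P 0 (ℓ - c))` have windowed angular sums
bounded at rate `M + ε + 2·c·arccos((1-δ)/(1+δ))`. -/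
lemma main_induction {d : ℕ} {A : ℕ → (Euc d →L[ℝ] Euc d)} (hA : ∀ n, IsUnit (A n))
    {ℓ : ℕ} {K : ℝ} (hK : 1 ≤ K) {σm σp : ℕ → ℝ}
    (hσ0 : ∀ i, 1 ≤ i → i ≤ ℓ → 0 < σm i)
    (hσ1 : ∀ i, 1 ≤ i → i ≤ ℓ → σm i ≤ σp i)
    (hσ2 : ∀ i, 1 ≤ i → i < ℓ → σp (i + 1) < σm i)
    {P : ℕ → ℕ → (Euc d →L[ℝ] Euc d)}
    (hproj : ∀ n i, 1 ≤ i → i ≤ ℓ + 1 → P n i ∘L P n i = P n i)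
    (hPl : ∀ n, P n (ℓ + 1) = 0)
    (hcomm : ∀ n m i, 1 ≤ i → i ≤ ℓ + 1 → P n i ∘L Phi A n m = Phi A n m ∘L P m i)
    (hbndS : ∀ i, 1 ≤ i → i ≤ ℓ → ∀ n m : ℕ, m ≤ n →
      ‖Phi A n m ∘L P m (i + 1)‖ ≤ K * (if i = ℓ then (0 : ℝ) else σp (i + 1)) ^ (n - m))
    (hbndU : ∀ i, 1 ≤ i → i ≤ ℓ → ∀ n m : ℕ, m ≤ n →
      ‖Phi A m n ∘L (1 - P n (i + 1))‖ ≤ K * (σm i ^ (n - m))⁻¹)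
    {M : ℝ} (hM0 : 0 ≤ M)
    (hMle : ∀ i, 1 ≤ i → i ≤ ℓ → thetaBar1 A (fiberW P 0 i) ≤ M)
    (hunif : ∀ i, 1 ≤ i → i ≤ ℓ →
      Tendsto (fun n : ℕ =>
          (sSup {x : ℝ | ∃ v ∈ fiberW P 0 i, v ≠ 0 ∧
            ∃ k : ℕ, x = aVec A v (k + 1) (k + n)}) / n) atTop
        (nhds (thetaBar1 A (fiberW P 0 i))))
    {ε δ : ℝ} (hε : 0 < ε) (hδ0 : 0 < δ) (hδ2 : δ ≤ 1 / 2) :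
    ∀ c : ℕ, ∃ C, 0 ≤ C ∧ ∀ k n : ℕ, ∀ v : Euc d, 1 ≤ ℓ - c → P 0 (ℓ - c) v = v → v ≠ 0 →
      aVec A v (k + 1) (k + n) ≤
        (n : ℝ) * (M + ε + 2 * (c : ℝ) * Real.arccos ((1 - δ) / (1 + δ))) + C := by
  classical
  set h : ℝ := Real.arccos ((1 - δ) / (1 + δ)) with hh
  have hh0 : 0 ≤ h := Real.arccos_nonneg _
  have hδ1 : δ < 1 := by linarith
  have hK0 : 0 < K := by linarith
  have LA : ∀ i, 1 ≤ i → i ≤ ℓ → ∃ C, 0 ≤ C ∧ ∀ k n : ℕ, ∀ v ∈ fiberW P 0 i, v ≠ 0 →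
      aVec A v (k + 1) (k + n) ≤ n * (M + ε) + C :=
    fun i h1 h2 => windowBound hε (hMle i h1 h2) hM0 (hunif i h1 h2)
  intro c
  induction c with
  | zero =>
      by_cases hl1 : 1 ≤ ℓ
      · obtain ⟨C, hC0, hC⟩ := LA ℓ hl1 le_rfl
        refine ⟨C, hC0, ?_⟩
        intro k n v _ hv hv0
        have hv' : P 0 ℓ v = v := by simpa using hv
        have hvW : v ∈ fiberW P 0 ℓ := by
          refine ⟨v, ?_⟩
          show fiberP P 0 ℓ v = v
          unfold fiberP
          rw [ContinuousLinearMap.sub_apply, hPl, ContinuousLinearMap.zero_apply, sub_zero, hv']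
        have hb := hC k n v hvW hv0
        have e : M + ε + 2 * ((0 : ℕ) : ℝ) * h = M + ε := by push_cast; ring
        rw [e]
        exact hb
      · exact ⟨0, le_rfl, fun k n v h1 _ _ => absurd h1 (by omega)⟩
  | succ c ih =>
      by_cases hl1 : 1 ≤ ℓ - (c + 1)
      swap
      · exact ⟨0, le_rfl, fun k n v h1 _ _ => absurd h1 hl1⟩
      obtain ⟨Cc, hCc0, hCc⟩ := ih
      set i : ℕ := ℓ - (c + 1) with hi
      have hi1 : 1 ≤ i := hl1
      have hiℓ : i < ℓ := by omega
      have hisucc : i + 1 = ℓ - c := by omega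
      obtain ⟨Ca, hCa0, hCa⟩ := LA i hi1 (le_of_lt hiℓ)
      have hσmi : 0 < σm i := hσ0 i hi1 (le_of_lt hiℓ)
      have hσpi : 0 < σp (i + 1) :=
        lt_of_lt_of_le (hσ0 (i + 1) (by omega) (by omega)) (hσ1 (i + 1) (by omega) (by omega))
      have hρ : σp (i + 1) < σm i := hσ2 i hi1 hiℓ
      set θ : ℝ := σm i / σp (i + 1) with hθdef
      have hθ : 1 < θ := (one_lt_div hσpi).2 hρ
      obtain ⟨ms, hms⟩ : ∃ ms : ℕ, K ^ 2 / δ ^ 2 < θ ^ ms := pow_unbounded_of_one_lt _ hθ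
      refine ⟨Cc + Ca + (ms + 1) * (Real.pi / 2), by positivity, ?_⟩
      intro k n v _ hv hv0
      -- components
      set r : Euc d := P 0 (i + 1) v with hrdef
      set u : Euc d := v - r with hudef
      have hPcomm1 : ∀ a b : ℕ, P a (i + 1) ∘L Phi A a b = Phi A a b ∘L P b (i + 1) :=
        fun a b => hcomm a b (i + 1) (by omega) (by omega)
      have hPr : P 0 (i + 1) r = r := by
        have := DFunLike.congr_fun (hproj 0 (i + 1) (by omega) (by omega)) v
        simpa using this
      have hPu : P 0 (i + 1) u = 0 := by
        rw [hudef, map_sub, hPr, ← hrdef, sub_self]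
      have huv : v = u + r := by rw [hudef, sub_add_cancel]
      have huW : u ∈ fiberW P 0 i := by
        refine ⟨v, ?_⟩
        show fiberP P 0 i v = u
        unfold fiberP
        rw [ContinuousLinearMap.sub_apply, hv, ← hrdef, ← hudef]
      by_cases hu0 : u = 0
      · -- v = r : pure rest vector, use the inductive hypothesis
        have hvr : v = r := by rw [huv, hu0, zero_add]
        have hb := hCc k n v (by omega)
          (by rw [← hisucc, hvr]; exact hPr) hv0
        refine hb.trans ?_
        have : (n : ℝ) * (M + ε + 2 * (c : ℝ) * h) ≤
            (n : ℝ) * (M + ε + 2 * ((c + 1 : ℕ) : ℝ) * h) := by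
          apply mul_le_mul_of_nonneg_left _ (Nat.cast_nonneg n)
          push_cast
          nlinarith
        nlinarith [this, hCa0, Real.pi_pos,
          mul_nonneg (by positivity : (0:ℝ) ≤ ((ms:ℝ) + 1)) (by positivity : (0:ℝ) ≤ Real.pi / 2)]
      by_cases hr0 : r = 0
      · -- v = u : pure fiber vector
        have hvu : v = u := by rw [huv, hr0, add_zero]
        have huW2 : v ∈ fiberW P 0 i := by rw [hvu]; exact huW
        have hb := hCa k n v huW2 hv0
        refine hb.trans ?_
        have : (n : ℝ) * (M + ε) ≤ (n : ℝ) * (M + ε + 2 * ((c + 1 : ℕ) : ℝ) * h) := by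
          apply mul_le_mul_of_nonneg_left _ (Nat.cast_nonneg n)
          push_cast
          nlinarith
        nlinarith [this, hCc0, mul_nonneg (by positivity : (0:ℝ) ≤ ((ms:ℝ) + 1))
          (by positivity : (0:ℝ) ≤ Real.pi / 2)]
      -- main case : u ≠ 0, r ≠ 0
      have hbS' : ∀ a b : ℕ, b ≤ a → ‖Phi A a b ∘L P b (i + 1)‖ ≤ K * σp (i + 1) ^ (a - b) := by
        intro a b hba
        have := hbndS i hi1 (le_of_lt hiℓ) a b hba
        rwa [if_neg (by omega)] at this
      have hrest : ∀ a b : ℕ, a ≤ b → ‖Phi A b 0 r‖ ≤ K * σp (i + 1) ^ (b - a) * ‖Phi A a 0 r‖ :=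
        fun a b hab => rest_growth hA hPcomm1 hbS' hPr hab
      have hfib : ∀ a b : ℕ, a ≤ b → ‖Phi A a 0 u‖ ≤ K * (σm i ^ (b - a))⁻¹ * ‖Phi A b 0 u‖ :=
        fun a b hab => fiber_growth hA hPcomm1 (hbndU i hi1 (le_of_lt hiℓ)) hPu hab
      have hUpos : ∀ m, 0 < ‖Phi A m 0 u‖ := fun m => norm_pos_iff.2 (Phi_ne_zero hA m hu0)
      have hRpos : ∀ m, 0 < ‖Phi A m 0 r‖ := fun m => norm_pos_iff.2 (Phi_ne_zero hA m hr0)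
      -- existence of the crossing time τ
      have hex : ∃ m : ℕ, δ * ‖Phi A m 0 r‖ ≤ ‖Phi A m 0 u‖ := by
        obtain ⟨n0, hn0⟩ :=
          pow_unbounded_of_one_lt (δ * K ^ 2 * ‖Phi A 0 0 r‖ / ‖Phi A 0 0 u‖) hθ
        refine ⟨n0, ?_⟩
        have a1 : ‖Phi A n0 0 r‖ ≤ K * σp (i + 1) ^ n0 * ‖Phi A 0 0 r‖ := by
          simpa using hrest 0 n0 (Nat.zero_le _)
        have a2 : ‖Phi A 0 0 u‖ ≤ K * (σm i ^ n0)⁻¹ * ‖Phi A n0 0 u‖ := by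
          simpa using hfib 0 n0 (Nat.zero_le _)
        have hpm : (0:ℝ) < σm i ^ n0 := pow_pos hσmi n0
        have hpp : (0:ℝ) < σp (i + 1) ^ n0 := pow_pos hσpi n0
        have hinv : (σm i ^ n0)⁻¹ * σm i ^ n0 = 1 := inv_mul_cancel₀ hpm.ne'
        have a2' : ‖Phi A 0 0 u‖ * σm i ^ n0 ≤ K * ‖Phi A n0 0 u‖ := by
          have h5 := mul_le_mul_of_nonneg_right a2 hpm.le
          calc ‖Phi A 0 0 u‖ * σm i ^ n0 ≤ K * (σm i ^ n0)⁻¹ * ‖Phi A n0 0 u‖ * σm i ^ n0 := h5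
            _ = K * ‖Phi A n0 0 u‖ * ((σm i ^ n0)⁻¹ * σm i ^ n0) := by ring
            _ = K * ‖Phi A n0 0 u‖ := by rw [hinv, mul_one]
        have hθn : θ ^ n0 * σp (i + 1) ^ n0 = σm i ^ n0 := by
          rw [hθdef, div_pow, div_mul_cancel₀ _ hpp.ne']
        -- from hn0 : δK²R0/U0 < θ^n0
        have s1 : δ * K ^ 2 * ‖Phi A 0 0 r‖ < θ ^ n0 * ‖Phi A 0 0 u‖ := by
          rw [div_lt_iff₀ (hUpos 0)] at hn0
          linarith
        have s2 : δ * K ^ 2 * ‖Phi A 0 0 r‖ * σp (i + 1) ^ n0 <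
            σm i ^ n0 * ‖Phi A 0 0 u‖ := by
          have := mul_lt_mul_of_pos_right s1 hpp
          calc δ * K ^ 2 * ‖Phi A 0 0 r‖ * σp (i + 1) ^ n0
              < θ ^ n0 * ‖Phi A 0 0 u‖ * σp (i + 1) ^ n0 := this
            _ = (θ ^ n0 * σp (i + 1) ^ n0) * ‖Phi A 0 0 u‖ := by ring
            _ = σm i ^ n0 * ‖Phi A 0 0 u‖ := by rw [hθn]
        have s3 : δ * K * σp (i + 1) ^ n0 * ‖Phi A 0 0 r‖ < ‖Phi A n0 0 u‖ := by
          have h6 : σm i ^ n0 * ‖Phi A 0 0 u‖ ≤ K * ‖Phi A n0 0 u‖ := by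
            calc σm i ^ n0 * ‖Phi A 0 0 u‖ = ‖Phi A 0 0 u‖ * σm i ^ n0 := by ring
              _ ≤ K * ‖Phi A n0 0 u‖ := a2'
          have h7 : δ * K ^ 2 * ‖Phi A 0 0 r‖ * σp (i + 1) ^ n0 < K * ‖Phi A n0 0 u‖ :=
            lt_of_lt_of_le s2 h6
          have h8 : K * (δ * K * σp (i + 1) ^ n0 * ‖Phi A 0 0 r‖) =
              δ * K ^ 2 * ‖Phi A 0 0 r‖ * σp (i + 1) ^ n0 := by ring
          nlinarith [h7, h8, hK0]
        have h9 : δ * ‖Phi A n0 0 r‖ ≤ δ * (K * σp (i + 1) ^ n0 * ‖Phi A 0 0 r‖) :=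
          mul_le_mul_of_nonneg_left a1 hδ0.le
        nlinarith [h9, s3]
      set τ : ℕ := Nat.find hex with hτdef
      have hτ : δ * ‖Phi A τ 0 r‖ ≤ ‖Phi A τ 0 u‖ := Nat.find_spec hex
      have hτmin : ∀ m, m < τ → ‖Phi A m 0 u‖ < δ * ‖Phi A m 0 r‖ :=
        fun m hm => not_le.1 (Nat.find_min hex hm)
      -- region-3 domination
      have hdom3 : ∀ m : ℕ, τ + ms ≤ m → ‖Phi A m 0 r‖ ≤ δ * ‖Phi A m 0 u‖ := by
        intro m hm
        set p : ℝ := σp (i + 1) ^ (m - τ) with hpdef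
        set s : ℝ := σm i ^ (m - τ) with hsdef
        have hp : 0 < p := pow_pos hσpi _
        have hs : 0 < s := pow_pos hσmi _
        have hθm : K ^ 2 / δ ^ 2 < s / p := by
          have h1 : θ ^ ms ≤ θ ^ (m - τ) := pow_le_pow_right₀ hθ.le (by omega)
          have h2 : θ ^ (m - τ) = s / p := by rw [hθdef, div_pow, hsdef, hpdef]
          rw [← h2]
          exact lt_of_lt_of_le hms h1
        have hsp : K ^ 2 * p < δ ^ 2 * s := by
          rw [div_lt_div_iff₀ (by positivity) hp] at hθm
          linarith
        have a1 : ‖Phi A m 0 r‖ ≤ K * p * ‖Phi A τ 0 r‖ := hrest τ m (by omega)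
        have a2 : ‖Phi A τ 0 u‖ ≤ K * s⁻¹ * ‖Phi A m 0 u‖ := hfib τ m (by omega)
        have hinv : s⁻¹ * s = 1 := inv_mul_cancel₀ hs.ne'
        have a2' : s * ‖Phi A τ 0 u‖ ≤ K * ‖Phi A m 0 u‖ := by
          have h5 := mul_le_mul_of_nonneg_left a2 hs.le
          calc s * ‖Phi A τ 0 u‖ ≤ s * (K * s⁻¹ * ‖Phi A m 0 u‖) := h5
            _ = K * ‖Phi A m 0 u‖ * (s⁻¹ * s) := by ring
            _ = K * ‖Phi A m 0 u‖ := by rw [hinv, mul_one]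
        have c1 : δ * s * ‖Phi A m 0 r‖ ≤ K * p * (s * (δ * ‖Phi A τ 0 r‖)) := by
          have := mul_le_mul_of_nonneg_left a1 (by positivity : (0:ℝ) ≤ δ * s)
          nlinarith [this]
        have c2 : K * p * (s * (δ * ‖Phi A τ 0 r‖)) ≤ K * p * (s * ‖Phi A τ 0 u‖) :=
          mul_le_mul_of_nonneg_left (mul_le_mul_of_nonneg_left hτ hs.le) (by positivity)
        have c3 : K * p * (s * ‖Phi A τ 0 u‖) ≤ K * p * (K * ‖Phi A m 0 u‖) :=
          mul_le_mul_of_nonneg_left a2' (by positivity)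
        have c4 : K * p * (K * ‖Phi A m 0 u‖) ≤ δ ^ 2 * s * ‖Phi A m 0 u‖ := by
          nlinarith [hsp, (hUpos m).le]
        have c5 : δ * s * ‖Phi A m 0 r‖ ≤ δ * s * (δ * ‖Phi A m 0 u‖) := by nlinarith [c1, c2, c3, c4]
        exact le_of_mul_le_mul_left c5 (by positivity)
      -- closeness of trajectories
      have close1 : ∀ m, m < τ → vecAngle (Phi A m 0 v) (Phi A m 0 r) ≤ h := by
        intro m hm
        have hsum : Phi A m 0 v = Phi A m 0 r + Phi A m 0 u := by
          rw [huv, map_add, add_comm]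
        rw [hsum]
        exact vecAngle_perturb (Phi_ne_zero hA m hr0) hδ1 (le_of_lt (hτmin m hm))
      have close3 : ∀ m, τ + ms ≤ m → vecAngle (Phi A m 0 v) (Phi A m 0 u) ≤ h := by
        intro m hm
        have hsum : Phi A m 0 v = Phi A m 0 u + Phi A m 0 r := by rw [huv, map_add]
        rw [hsum]
        exact vecAngle_perturb (Phi_ne_zero hA m hu0) hδ1 (hdom3 m hm)
      -- per-step comparisons
      have sb1 : ∀ j, 1 ≤ j → j < τ →
          vecAngle (Phi A (j - 1) 0 v) (Phi A j 0 v) ≤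
            vecAngle (Phi A (j - 1) 0 r) (Phi A j 0 r) + 2 * h := by
        intro j hj1 hjτ
        have t1 := vecAngle_triangle (Phi_ne_zero hA (j - 1) hv0)
          (Phi_ne_zero hA (j - 1) hr0) (Phi_ne_zero hA j hv0)
        have t2 := vecAngle_triangle (Phi_ne_zero hA (j - 1) hr0)
          (Phi_ne_zero hA j hr0) (Phi_ne_zero hA j hv0)
        have e1 := close1 (j - 1) (by omega)
        have e2 : vecAngle (Phi A j 0 r) (Phi A j 0 v) ≤ h := by
          rw [vecAngle_comm']; exact close1 j hjτ
        linarith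
      have sb3 : ∀ j, τ + ms + 1 ≤ j →
          vecAngle (Phi A (j - 1) 0 v) (Phi A j 0 v) ≤
            vecAngle (Phi A (j - 1) 0 u) (Phi A j 0 u) + 2 * h := by
        intro j hj
        have t1 := vecAngle_triangle (Phi_ne_zero hA (j - 1) hv0)
          (Phi_ne_zero hA (j - 1) hu0) (Phi_ne_zero hA j hv0)
        have t2 := vecAngle_triangle (Phi_ne_zero hA (j - 1) hu0)
          (Phi_ne_zero hA j hu0) (Phi_ne_zero hA j hv0)
        have e1 := close3 (j - 1) (by omega)
        have e2 : vecAngle (Phi A j 0 u) (Phi A j 0 v) ≤ h := by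
          rw [vecAngle_comm']; exact close3 j (by omega)
        linarith
      -- split points
      obtain ⟨n1, hn1⟩ : ∃ n1, min (k + n) (max k (τ - 1)) = k + n1 :=
        ⟨min (k + n) (max k (τ - 1)) - k, by omega⟩
      obtain ⟨n2, hn2⟩ : ∃ n2, min (k + n) (max (k + n1) (τ + ms)) = (k + n1) + n2 :=
        ⟨min (k + n) (max (k + n1) (τ + ms)) - (k + n1), by omega⟩
      obtain ⟨n3, hn3⟩ : ∃ n3, k + n = (k + n1 + n2) + n3 := ⟨n - n1 - n2, by omega⟩
      have hsplit : aVec A v (k + 1) (k + n) =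
          aVec A v (k + 1) (k + n1) + aVec A v ((k + n1) + 1) (k + n1 + n2) +
            aVec A v ((k + n1 + n2) + 1) (k + n) := by
        rw [aVec_split v (by omega : k ≤ k + n1) (by omega : k + n1 ≤ k + n),
          aVec_split v (by omega : k + n1 ≤ k + n1 + n2) (by omega : k + n1 + n2 ≤ k + n)]
        ring
      -- region 1
      have R1 : aVec A v (k + 1) (k + n1) ≤
          (n1 : ℝ) * (M + ε + 2 * (c : ℝ) * h) + Cc + (n1 : ℝ) * (2 * h) := by
        have hstep : ∀ j ∈ Finset.Icc (k + 1) (k + n1),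
            vecAngle (Phi A (j - 1) 0 v) (Phi A j 0 v) ≤
              vecAngle (Phi A (j - 1) 0 r) (Phi A j 0 r) + 2 * h := by
          intro j hj
          have hj' := Finset.mem_Icc.1 hj
          exact sb1 j (by omega) (by omega)
        have hsum : aVec A v (k + 1) (k + n1) ≤ aVec A r (k + 1) (k + n1) + (n1 : ℝ) * (2 * h) := by
          unfold aVec
          calc (∑ j ∈ Finset.Icc (k + 1) (k + n1),
                vecAngle (Phi A (j - 1) 0 v) (Phi A j 0 v))
              ≤ ∑ j ∈ Finset.Icc (k + 1) (k + n1),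
                (vecAngle (Phi A (j - 1) 0 r) (Phi A j 0 r) + 2 * h) :=
                Finset.sum_le_sum hstep
            _ = (∑ j ∈ Finset.Icc (k + 1) (k + n1),
                vecAngle (Phi A (j - 1) 0 r) (Phi A j 0 r)) + (n1 : ℝ) * (2 * h) := by
                rw [Finset.sum_add_distrib, Finset.sum_const, Nat.card_Icc]
                have e : k + n1 + 1 - (k + 1) = n1 := by omega
                rw [e, nsmul_eq_mul]
        have hIH : aVec A r (k + 1) (k + n1) ≤ (n1 : ℝ) * (M + ε + 2 * (c : ℝ) * h) + Cc :=
          hCc k n1 r (by omega) (by rw [← hisucc]; exact hPr) hr0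
        linarith
      -- region 2
      have R2 : aVec A v ((k + n1) + 1) (k + n1 + n2) ≤ ((ms : ℝ) + 1) * (Real.pi / 2) := by
        have hb := aVec_window_le (A := A) v (k + n1) n2
        have hn2ms : (n2 : ℝ) ≤ (ms : ℝ) + 1 := by
          have : n2 ≤ ms + 1 := by omega
          exact_mod_cast this
        calc aVec A v ((k + n1) + 1) ((k + n1) + n2) ≤ (n2 : ℝ) * (Real.pi / 2) := hb
          _ ≤ ((ms : ℝ) + 1) * (Real.pi / 2) := by
              apply mul_le_mul_of_nonneg_right hn2ms (by positivity)
      -- region 3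
      have R3 : aVec A v ((k + n1 + n2) + 1) (k + n) ≤
          (n3 : ℝ) * (M + ε) + Ca + (n3 : ℝ) * (2 * h) := by
        have hstep : ∀ j ∈ Finset.Icc ((k + n1 + n2) + 1) (k + n),
            vecAngle (Phi A (j - 1) 0 v) (Phi A j 0 v) ≤
              vecAngle (Phi A (j - 1) 0 u) (Phi A j 0 u) + 2 * h := by
          intro j hj
          have hj' := Finset.mem_Icc.1 hj
          exact sb3 j (by omega)
        have hsum : aVec A v ((k + n1 + n2) + 1) (k + n) ≤
            aVec A u ((k + n1 + n2) + 1) (k + n) + (n3 : ℝ) * (2 * h) := by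
          unfold aVec
          calc (∑ j ∈ Finset.Icc ((k + n1 + n2) + 1) (k + n),
                vecAngle (Phi A (j - 1) 0 v) (Phi A j 0 v))
              ≤ ∑ j ∈ Finset.Icc ((k + n1 + n2) + 1) (k + n),
                (vecAngle (Phi A (j - 1) 0 u) (Phi A j 0 u) + 2 * h) :=
                Finset.sum_le_sum hstep
            _ = (∑ j ∈ Finset.Icc ((k + n1 + n2) + 1) (k + n),
                vecAngle (Phi A (j - 1) 0 u) (Phi A j 0 u)) + (n3 : ℝ) * (2 * h) := by
                rw [Finset.sum_add_distrib, Finset.sum_const, Nat.card_Icc]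
                have e : k + n + 1 - (k + n1 + n2 + 1) = n3 := by omega
                rw [e, nsmul_eq_mul]
        have hLA : aVec A u ((k + n1 + n2) + 1) (k + n) ≤ (n3 : ℝ) * (M + ε) + Ca := by
          have := hCa (k + n1 + n2) n3 u huW hu0
          rwa [← hn3] at this
        linarith
      -- combine
      have hcast : (n1 : ℝ) + (n3 : ℝ) ≤ (n : ℝ) := by
        have : n1 + n3 ≤ n := by omega
        exact_mod_cast this
      have hrate : (0 : ℝ) ≤ M + ε + 2 * ((c : ℝ) + 1) * h := by positivity
      have hmulr := mul_le_mul_of_nonneg_right hcast hrate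
      have h3ch : (0:ℝ) ≤ (n3:ℝ) * ((c:ℝ) * h) :=
        mul_nonneg (Nat.cast_nonneg n3)
          (mul_nonneg (Nat.cast_nonneg c) hh0)
      rw [hsplit]
      push_cast
      nlinarith [R1, R2, R3, hmulr, hh0, h3ch,
        (Nat.cast_nonneg n1 : (0:ℝ) ≤ (n1:ℝ)), (Nat.cast_nonneg n3 : (0:ℝ) ≤ (n3:ℝ))]

/-- **Theorem 3.6 / Th4.1.** Under the spectral hypotheses, if inner and
uniform inner angular values agree within every fiber, then the first inner angular value
satisfies `θ̄₁(ℝ^d) = max_{i=1,…,ℓ} θ̄₁(𝒲_0^i)`. -/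
theorem first_inner_angular_value_eq_max_over_fibers
    {d : ℕ} (A : ℕ → (Euc d →L[ℝ] Euc d)) (hA : ∀ n, IsUnit (A n))
    (hbd : ∃ Cb : ℝ, ∀ n, ‖A n‖ + ‖Ring.inverse (A n)‖ ≤ Cb)
    (ℓ : ℕ) (hℓ : 1 ≤ ℓ) (K : ℝ) (hK : 1 ≤ K)
    (σm σp : ℕ → ℝ)
    (hσ0 : ∀ i, 1 ≤ i → i ≤ ℓ → 0 < σm i)
    (hσ1 : ∀ i, 1 ≤ i → i ≤ ℓ → σm i ≤ σp i)
    (hσ2 : ∀ i, 1 ≤ i → i < ℓ → σp (i + 1) < σm i)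
    (P : ℕ → ℕ → (Euc d →L[ℝ] Euc d))
    (hproj : ∀ n i, 1 ≤ i → i ≤ ℓ + 1 → P n i ∘L P n i = P n i)
    (hP1 : ∀ n, P n 1 = 1)
    (hPl : ∀ n, P n (ℓ + 1) = 0)
    (hcomm : ∀ n m i, 1 ≤ i → i ≤ ℓ + 1 → P n i ∘L Phi A n m = Phi A n m ∘L P m i)
    (hrange : ∀ n i, 1 ≤ i → i ≤ ℓ → LinearMap.range (P n (i + 1) : Euc d →ₗ[ℝ] Euc d) ≤ LinearMap.range (P n i : Euc d →ₗ[ℝ] Euc d))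
    (hker : ∀ n i, 1 ≤ i → i ≤ ℓ → LinearMap.ker (P n i : Euc d →ₗ[ℝ] Euc d) ≤ LinearMap.ker (P n (i + 1) : Euc d →ₗ[ℝ] Euc d))
    (hbndS : ∀ i, 1 ≤ i → i ≤ ℓ → ∀ n m : ℕ, m ≤ n →
      ‖Phi A n m ∘L P m (i + 1)‖ ≤ K * (if i = ℓ then (0 : ℝ) else σp (i + 1)) ^ (n - m))
    (hbndU : ∀ i, 1 ≤ i → i ≤ ℓ → ∀ n m : ℕ, m ≤ n →
      ‖Phi A m n ∘L (1 - P n (i + 1))‖ ≤ K * (σm i ^ (n - m))⁻¹)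
    (hunif : ∀ i, 1 ≤ i → i ≤ ℓ →
      Tendsto (fun n : ℕ =>
          (sSup {x : ℝ | ∃ v ∈ fiberW P 0 i, v ≠ 0 ∧
            ∃ k : ℕ, x = aVec A v (k + 1) (k + n)}) / n) atTop
        (nhds (thetaBar1 A (fiberW P 0 i)))) :
    thetaBar1 A (⊤ : Submodule ℝ (Euc d)) =
      sSup {x : ℝ | ∃ i : ℕ, 1 ≤ i ∧ i ≤ ℓ ∧ x = thetaBar1 A (fiberW P 0 i)} := by
  classical
  set WSet : Set ℝ := {x : ℝ | ∃ i : ℕ, 1 ≤ i ∧ i ≤ ℓ ∧ x = thetaBar1 A (fiberW P 0 i)}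
    with hWSet
  have hbddW : BddAbove WSet := by
    refine ⟨Real.pi / 2, ?_⟩
    rintro x ⟨i, h1, h2, rfl⟩
    exact thetaBar1_le_pi_div_two _
  have hmem1 : thetaBar1 A (fiberW P 0 1) ∈ WSet := ⟨1, le_rfl, hℓ, rfl⟩
  have hMle : ∀ i, 1 ≤ i → i ≤ ℓ → thetaBar1 A (fiberW P 0 i) ≤ sSup WSet :=
    fun i h1 h2 => le_csSup hbddW ⟨i, h1, h2, rfl⟩
  have hM0 : 0 ≤ sSup WSet := le_trans (thetaBar1_nonneg _) (hMle 1 le_rfl hℓ)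
  apply le_antisymm
  · -- hard direction: θ̄₁(⊤) ≤ max
    apply le_of_forall_pos_le_add
    intro η hη
    -- pick δ small so that the arccos error term is below η/4
    have hcont : Tendsto (fun x : ℝ => Real.arccos ((1 - x) / (1 + x)))
        (nhdsWithin 0 (Set.Ioi 0)) (nhds 0) := by
      have c0 : ContinuousAt (fun x : ℝ => (1 - x) / (1 + x)) 0 := by
        apply ContinuousAt.div
        · exact (continuous_const.sub continuous_id).continuousAt
        · exact (continuous_const.add continuous_id).continuousAt
        · norm_num
      have c1 : ContinuousAt (fun x : ℝ => Real.arccos ((1 - x) / (1 + x))) 0 :=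
        (Real.continuous_arccos.continuousAt).comp c0
      have e0 : Real.arccos ((1 - (0:ℝ)) / (1 + 0)) = 0 := by
        norm_num [Real.arccos_one]
      have c2 := c1.tendsto
      rw [e0] at c2
      exact c2.mono_left nhdsWithin_le_nhds
    have htgt0 : 0 < η / (4 * ((ℓ : ℝ) + 1)) := by positivity
    have hev1 : ∀ᶠ x in nhdsWithin (0:ℝ) (Set.Ioi 0),
        Real.arccos ((1 - x) / (1 + x)) < η / (4 * ((ℓ : ℝ) + 1)) :=
      hcont.eventually_lt_const htgt0
    have hev2 : ∀ᶠ x in nhdsWithin (0:ℝ) (Set.Ioi 0), 0 < x :=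
      eventually_mem_nhdsWithin
    have hev3 : ∀ᶠ x in nhdsWithin (0:ℝ) (Set.Ioi 0), x < 1 / 2 :=
      Filter.Tendsto.eventually_lt_const (by norm_num : (0:ℝ) < 1 / 2)
        (tendsto_id.mono_left nhdsWithin_le_nhds)
    obtain ⟨δ, hδa, hδb, hδc⟩ := (hev1.and (hev2.and hev3)).exists
    -- apply the main induction at level c = ℓ - 1 (covering all of ℝ^d)
    obtain ⟨C, hC0, hC⟩ := main_induction hA hK hσ0 hσ1 hσ2 hproj hPl hcomm hbndS hbndU
      hM0 hMle hunif (by positivity : (0:ℝ) < η / 4) hδb (le_of_lt hδc) (ℓ - 1)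
    set harc : ℝ := Real.arccos ((1 - δ) / (1 + δ)) with hharc
    have harc0 : 0 ≤ harc := Real.arccos_nonneg _
    set B : ℝ := sSup WSet + η / 4 + 2 * ((ℓ - 1 : ℕ) : ℝ) * harc with hB
    have hB0 : 0 ≤ B := by positivity
    have key : ∀ n : ℕ, ∀ v : Euc d, v ≠ 0 → aVec A v 1 n ≤ (n : ℝ) * B + C := by
      intro n v hv0
      have h1 : 1 ≤ ℓ - (ℓ - 1) := by omega
      have h2 : P 0 (ℓ - (ℓ - 1)) v = v := by
        have e : ℓ - (ℓ - 1) = 1 := by omega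
        rw [e, hP1]
        rfl
      have h3 := hC 0 n v h1 h2 hv0
      simpa using h3
    have final : thetaBar1 A (⊤ : Submodule ℝ (Euc d)) ≤ B := by
      unfold thetaBar1
      apply limsup_le_of_le_tendsto _ (fun n : ℕ => B + C / n) _ (sSup_S_nonneg ⊤)
      · have h4 : Tendsto (fun n : ℕ => B + C / n) atTop (nhds (B + 0)) :=
          tendsto_const_nhds.add (tendsto_const_div_atTop_nhds_zero_nat C)
        simpa using h4
      · intro n hn
        have hn0 : (0:ℝ) < n := by exact_mod_cast hn
        apply Real.sSup_le _ (by positivity)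
        rintro x ⟨v, hv, hv0, rfl⟩
        rw [div_le_iff₀ hn0]
        have h5 := key n v hv0
        have h6 : (B + C / n) * n = (n : ℝ) * B + C := by
          field_simp
        rw [h6]
        exact h5
    have hbound : 2 * ((ℓ - 1 : ℕ) : ℝ) * harc ≤ η / 2 := by
      have h7 : ((ℓ - 1 : ℕ) : ℝ) ≤ (ℓ : ℝ) := by
        have : (ℓ - 1 : ℕ) ≤ ℓ := by omega
        exact_mod_cast this
      have h8 : harc ≤ η / (4 * ((ℓ : ℝ) + 1)) := le_of_lt hδa
      have h9 : 2 * ((ℓ - 1 : ℕ) : ℝ) * harc ≤ 2 * ((ℓ : ℝ) + 1) * (η / (4 * ((ℓ : ℝ) + 1))) := by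
        have h7' : 2 * ((ℓ - 1 : ℕ) : ℝ) ≤ 2 * ((ℓ : ℝ) + 1) := by linarith
        exact mul_le_mul h7' h8 harc0 (by positivity)
      have h10 : 2 * ((ℓ : ℝ) + 1) * (η / (4 * ((ℓ : ℝ) + 1))) = η / 2 := by
        field_simp
        ring
      linarith
    calc thetaBar1 A (⊤ : Submodule ℝ (Euc d)) ≤ B := final
      _ ≤ sSup WSet + η / 4 + η / 2 := by rw [hB]; linarith
      _ ≤ sSup WSet + η := by linarith
  · -- easy direction
    apply csSup_le ⟨_, hmem1⟩
    rintro x ⟨i, h1, h2, rfl⟩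
    exact thetaBar1_le_top _
end
end
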